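/- arXiv:1308.3790 — 11 statements merged into one kernel-verified Lean document; each statement's English description precedes it below -/
import Mathlib

section
/- Let U and V_n (n ∈ ℕ) be pairwise non-isomorphic selective ultrafilters on ℕ. Then there is a set X ∈ U-∑_n V_n on which the second projection π₂ is one-to-one. -/
/-- The `U`-indexed sum of the ultrafilters `V n`: a set `X ⊆ ℕ × ℕ` belongs to the sum
iff `{n | X(n) ∈ V n} ∈ U`, where `X(n)` is the `n`-th vertical section of `X`. -/
def sumUF (U : Ultrafilter ℕ) (V : ℕ → Ultrafilter ℕ) : Ultrafilter (ℕ × ℕ) :=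
  U.bind fun n => (V n).map fun m => (n, m)

/-- `U` is selective: for every `f : ℕ → ℕ` there is `A ∈ U` on which `f` is
one-to-one or constant. -/
def IsSelective (U : Ultrafilter ℕ) : Prop :=
  ∀ f : ℕ → ℕ, ∃ A ∈ U, Set.InjOn f A ∨ ∃ c, ∀ a ∈ A, f a = c

/-- Two ultrafilters on ℕ are (RK-)isomorphic iff a bijection of ℕ carries one to the other. -/
def RKIso (U V : Ultrafilter ℕ) : Prop :=
  ∃ e : ℕ ≃ ℕ, Ultrafilter.map (⇑e) U = V

lemma mem_sumUF (U : Ultrafilter ℕ) (V : ℕ → Ultrafilter ℕ) (X : Set (ℕ × ℕ)) :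
    X ∈ sumUF U V ↔ {n | (fun m => (n, m)) ⁻¹' X ∈ V n} ∈ U := by
  show X ∈ ((↑U : Filter ℕ).bind fun x => Filter.map (fun m => (x, m)) ↑(V x)) ↔ _
  rw [Filter.mem_bind']
  simp [Filter.mem_map]

/-- Selective nonprincipal ultrafilters are P-points. -/
lemma ppoint (V : Ultrafilter ℕ) (hsel : IsSelective V)
    (hcof : (V : Filter ℕ) ≤ Filter.cofinite) (E : ℕ → Set ℕ) (hE : ∀ k, E k ∈ V) :
    ∃ D ∈ V, ∀ k, (D \ E k).Finite := by
  classical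
  set E' : ℕ → Set ℕ := fun k => (⋂ j ∈ Finset.range (k + 1), E j) ∩ Set.Ici k with hE'def
  have hE' : ∀ k, E' k ∈ V := by
    intro k
    refine Filter.inter_mem (Filter.biInter_finset_mem _ |>.2 fun j _ => hE j) (hcof ?_)
    have : (Set.Ici k)ᶜ.Finite := by
      rw [Set.compl_Ici]; exact Set.finite_Iio k
    exact this
  have hex : ∀ x : ℕ, ∃ k, x ∉ E' k := by
    intro x
    refine ⟨x + 1, fun hx => ?_⟩
    have h2 : x + 1 ≤ x := hx.2
    omega
  let f : ℕ → ℕ := fun x => Nat.find (hex x)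
  have hf1 : ∀ x, x ∉ E' (f x) := fun x => Nat.find_spec (hex x)
  have hf2 : ∀ x k, k < f x → x ∈ E' k := by
    intro x k hk
    by_contra h
    have : f x ≤ k := Nat.find_le h
    omega
  obtain ⟨A, hA, hcase⟩ := hsel f
  rcases hcase with hinj | ⟨c, hc⟩
  · refine ⟨A, hA, fun k => ?_⟩
    have hsub : A \ E k ⊆ A ∩ f ⁻¹' Set.Iic k := by
      rintro x ⟨hxA, hxE⟩
      refine ⟨hxA, ?_⟩
      have hne : x ∉ E' k := fun hx => hxE (by
        have := hx.1
        simp only [Set.mem_iInter] at this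
        exact this k (Finset.mem_range.2 (by omega)))
      simp only [Set.mem_preimage, Set.mem_Iic]
      by_contra h
      exact hne (hf2 x k (by omega))
    refine Set.Finite.subset ?_ hsub
    have hi : Set.InjOn f (A ∩ f ⁻¹' Set.Iic k) := hinj.mono Set.inter_subset_left
    have himg : f '' (A ∩ f ⁻¹' Set.Iic k) ⊆ Set.Iic k := by
      rintro y ⟨x, ⟨_, hx⟩, rfl⟩; exact hx
    exact Set.Finite.of_finite_image ((Set.finite_Iic k).subset himg) hi
  · exfalso
    obtain ⟨x, hxA, hxE⟩ := Ultrafilter.nonempty_of_mem (Filter.inter_mem hA (hE' c))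
    refine hf1 x ?_
    rw [hc x hxA]
    exact hxE

lemma sepUF (V W : Ultrafilter ℕ) (h : V ≠ W) : ∃ S, S ∈ V ∧ Sᶜ ∈ W := by
  by_contra hc
  push_neg at hc
  have hle : (W : Filter ℕ) ≤ V := fun S hS =>
    Ultrafilter.compl_notMem_iff.1 fun hcompl => (hc _ hS) hcompl
  exact h (Ultrafilter.coe_le_coe.1 hle).symm

theorem stmt1 (U : Ultrafilter ℕ) (V : ℕ → Ultrafilter ℕ)
    (hUsel : IsSelective U) (hVsel : ∀ n, IsSelective (V n))
    (hUV : ∀ n, ¬ RKIso U (V n))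
    (hVV : ∀ m n, m ≠ n → ¬ RKIso (V m) (V n)) :
    ∃ X ∈ sumUF U V, Set.InjOn Prod.snd X := by
  classical
  rcases Ultrafilter.le_cofinite_or_eq_pure U with hU | ⟨a, rfl⟩
  swap
  · -- principal U
    refine ⟨{a} ×ˢ Set.univ, ?_, ?_⟩
    · rw [mem_sumUF]
      have ha : a ∈ {n | (fun m => (n, m)) ⁻¹' ({a} ×ˢ (Set.univ : Set ℕ)) ∈ V n} := by
        have : (fun m => (a, m)) ⁻¹' ({a} ×ˢ (Set.univ : Set ℕ)) = Set.univ := by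
          ext m; simp
        simp only [Set.mem_setOf_eq, this]
        exact Filter.univ_mem
      exact Ultrafilter.mem_pure.2 ha
    · rintro ⟨p1, p2⟩ ⟨hp, -⟩ ⟨q1, q2⟩ ⟨hq, -⟩ h
      simp only [Set.mem_singleton_iff] at hp hq
      simp only at h
      simp [hp, hq, h]
  -- nonprincipal U
  set A : Set ℕ := {n | (V n : Filter ℕ) ≤ Filter.cofinite} with hAdef
  have hAc : Aᶜ.Subsingleton := by
    intro m hm n hn
    by_contra hne
    rcases (Ultrafilter.le_cofinite_or_eq_pure (V m)).resolve_left hm with ⟨b, hb⟩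
    rcases (Ultrafilter.le_cofinite_or_eq_pure (V n)).resolve_left hn with ⟨c, hc⟩
    exact hVV m n hne ⟨Equiv.swap b c, by rw [hb, hc, Ultrafilter.map_pure]; simp⟩
  have hAU : A ∈ U := by
    refine hU ?_
    have : Aᶜ.Finite := hAc.finite
    simpa [Filter.mem_cofinite] using this
  have hVne : ∀ m n, m ≠ n → V m ≠ V n := by
    intro m n h heq
    exact hVV m n h ⟨Equiv.refl ℕ, by simp [heq]⟩
  choose S hS1 hS2 using fun m n (h : m ≠ n) => sepUF (V m) (V n) (hVne m n h)
  have hD0 : ∀ n, ∃ D, n ∈ A → D ∈ V n ∧ ∀ k (h : n ≠ k), (D \ S n k h).Finite := by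
    intro n
    by_cases hn : n ∈ A
    · obtain ⟨D, hD, hfin⟩ := ppoint (V n) (hVsel n) hn
        (fun k => if h : n = k then Set.univ else S n k h)
        (fun k => by
          by_cases h : n = k
          · simp only [h, dif_pos rfl]; exact Filter.univ_mem
          · simpa [h] using hS1 n k h)
      refine ⟨D, fun _ => ⟨hD, fun k h => ?_⟩⟩
      have := hfin k
      simpa [h] using this
    · exact ⟨∅, fun h => absurd h hn⟩
  choose D hD using hD0
  set T : ℕ → ℕ → Set ℕ := fun m n => ⋂ (_ : m ≠ n), (S m n ‹_›)ᶜ with hTdef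
  have hTmem : ∀ m n, m ≠ n → T m n ∈ V n := fun m n h =>
    Filter.mem_of_superset (hS2 m n h) (fun x hx => Set.mem_iInter.2 fun _ => hx)
  have hTsub : ∀ m n (h : m ≠ n) x, x ∈ T m n → x ∉ S m n h := by
    intro m n h x hx
    exact Set.mem_iInter.1 hx h
  -- B n : almost-disjoint family
  set B : ℕ → Set ℕ := fun n =>
    if hn : n ∈ A then D n ∩ ⋂ m ∈ Finset.range n, T m n else ∅ with hBdef
  have hBmem : ∀ n ∈ A, B n ∈ V n := by
    intro n hn
    rw [hBdef]; simp only [dif_pos hn]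
    refine Filter.inter_mem ((hD n hn).1) (Filter.biInter_finset_mem _ |>.2 fun m hm => ?_)
    exact hTmem m n (by have := Finset.mem_range.1 hm; omega)
  have hBD : ∀ n (x : ℕ), x ∈ B n → n ∈ A ∧ x ∈ D n ∧ ∀ m < n, x ∈ T m n := by
    intro n x hx
    rw [hBdef] at hx
    by_cases hn : n ∈ A
    · simp only [dif_pos hn, Set.mem_inter_iff, Set.mem_iInter] at hx
      exact ⟨hn, hx.1, fun m hm => hx.2 m (Finset.mem_range.2 hm)⟩
    · simp [dif_neg hn] at hx
  have had : ∀ m n, m < n → (B m ∩ B n).Finite := by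
    intro m n hmn
    by_cases hm : m ∈ A
    · have hne : m ≠ n := by omega
      have hsub : B m ∩ B n ⊆ D m \ S m n hne := by
        rintro x ⟨hxm, hxn⟩
        obtain ⟨_, hxD, -⟩ := hBD m x hxm
        obtain ⟨-, -, hT'⟩ := hBD n x hxn
        exact ⟨hxD, hTsub m n hne x (hT' m hmn)⟩
      exact Set.Finite.subset ((hD m hm).2 n hne) hsub
    · have : B m = ∅ := by rw [hBdef]; simp [dif_neg hm]
      simp [this]
  -- disjointify
  set B' : ℕ → Set ℕ := fun n => B n \ ⋃ m ∈ Finset.range n, B m with hB'def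
  have hB'mem : ∀ n ∈ A, B' n ∈ V n := by
    intro n hn
    have hGfin : (⋃ m ∈ Finset.range n, B m ∩ B n).Finite := by
      apply Set.Finite.biUnion (Finset.range n).finite_toSet
      intro m hm
      exact had m n (Finset.mem_range.1 hm)
    have hGc : (⋃ m ∈ Finset.range n, B m ∩ B n)ᶜ ∈ V n := hn (by
      simpa [Filter.mem_cofinite] using hGfin)
    refine Filter.mem_of_superset (Filter.inter_mem (hBmem n hn) hGc) ?_
    rintro x ⟨hxB, hxG⟩
    refine ⟨hxB, fun hx => hxG ?_⟩
    simp only [Set.mem_iUnion] at hx ⊢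
    obtain ⟨m, hm, hxm⟩ := hx
    exact ⟨m, hm, hxm, hxB⟩
  have hB'disj : ∀ m n, m < n → ∀ x, x ∈ B' m → x ∈ B' n → False := by
    intro m n hmn x hxm hxn
    exact hxn.2 (Set.mem_iUnion.2 ⟨m, Set.mem_iUnion.2 ⟨Finset.mem_range.2 hmn, hxm.1⟩⟩)
  -- the witness
  refine ⟨{p : ℕ × ℕ | p.1 ∈ A ∧ p.2 ∈ B' p.1}, ?_, ?_⟩
  · rw [mem_sumUF]
    refine Filter.mem_of_superset hAU ?_
    intro n hn
    simp only [Set.mem_setOf_eq]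
    refine Filter.mem_of_superset (hB'mem n hn) ?_
    intro m hm
    exact ⟨hn, hm⟩
  · rintro ⟨p1, p2⟩ ⟨-, hp⟩ ⟨q1, q2⟩ ⟨-, hq⟩ h
    simp only at h hp hq
    subst h
    rcases lt_trichotomy p1 q1 with hlt | heq | hgt
    · exact absurd (hB'disj p1 q1 hlt p2 hp hq) (by simp)
    · simp [heq]
    · exact absurd (hB'disj q1 p1 hgt p2 hq hp) (by simp)
end

section
/- Let U and V_n (n ∈ ℕ) be pairwise non-isomorphic selective ultrafilters on ℕ. Then the sum U-∑_n V_n is a Q-point: for every finite-to-one function f : ℕ×ℕ → ℕ there is a set X ∈ U-∑_n V_n on which f is one-to-one. -/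
open Set Filter

/-- Nonprincipality, phrased as: every member is infinite. -/
def UFNP (V : Ultrafilter ℕ) : Prop := ∀ s ∈ V, s.Infinite

lemma ufnp_or_pure (V : Ultrafilter ℕ) : UFNP V ∨ ∃ a, V = pure a := by
  by_cases h : UFNP V
  · exact Or.inl h
  · right
    simp only [UFNP, not_forall] at h
    obtain ⟨s, hs, hfin⟩ := h
    rw [Set.not_infinite] at hfin
    obtain ⟨a, _, ha⟩ := Ultrafilter.eq_pure_of_finite_mem hfin hs
    exact ⟨a, ha⟩

lemma ufnp_notMem {V : Ultrafilter ℕ} (h : UFNP V) {s : Set ℕ} (hs : s.Finite) : s ∉ V :=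
  fun hm => (h s hm) hs

lemma rk_symm {U V : Ultrafilter ℕ} (h : RKIso U V) : RKIso V U := by
  obtain ⟨e, he⟩ := h
  refine ⟨e.symm, ?_⟩
  rw [← he, Ultrafilter.map_map]
  simp

lemma rk_trans {U V W : Ultrafilter ℕ} (h1 : RKIso U V) (h2 : RKIso V W) : RKIso U W := by
  obtain ⟨e, he⟩ := h1
  obtain ⟨e', he'⟩ := h2
  exact ⟨e.trans e', by rw [← he', ← he, Ultrafilter.map_map]; rfl⟩

lemma rk_pure (a b : ℕ) : RKIso (pure a) (pure b) :=
  ⟨Equiv.swap a b, by rw [Ultrafilter.map_pure]; simp⟩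

/-- selective implies Q-point -/
lemma sel_qpoint {V : Ultrafilter ℕ} (hsel : IsSelective V) {h : ℕ → ℕ}
    (hfin : ∀ k, (h ⁻¹' {k}).Finite) : ∃ A ∈ V, Set.InjOn h A := by
  obtain ⟨A, hA, hinj | ⟨c, hc⟩⟩ := hsel h
  · exact ⟨A, hA, hinj⟩
  · have hAfin : A.Finite := (hfin c).subset (fun a ha => hc a ha)
    obtain ⟨a, _, ha⟩ := Ultrafilter.eq_pure_of_finite_mem hAfin hA
    refine ⟨{a}, ?_, ?_⟩
    · rw [ha]; exact Ultrafilter.mem_pure.2 rfl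
    · intro x hx y hy _
      rw [mem_singleton_iff] at hx hy; rw [hx, hy]

/-- selective implies P-point -/
lemma sel_ppoint {V : Ultrafilter ℕ} (hsel : IsSelective V) (As : ℕ → Set ℕ)
    (hAs : ∀ k, As k ∈ V) : ∃ B ∈ V, ∀ k, (B \ As k).Finite := by
  rcases ufnp_or_pure V with hnp | ⟨a, rfl⟩
  · set A' : ℕ → Set ℕ := fun k => (⋂ i ∈ Set.Iic k, As i) ∩ Set.Ioi k with hA'
    have hA'mem : ∀ k, A' k ∈ V := by
      intro k
      refine inter_mem ?_ ?_
      · exact (Filter.biInter_mem (Set.finite_Iic k)).2 (fun i _ => hAs i)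
      · rw [← Set.compl_Iic]
        exact Ultrafilter.compl_mem_iff_notMem.2 (ufnp_notMem hnp (Set.finite_Iic k))
    have hsub : ∀ i k, i ≤ k → A' k ⊆ As i := fun i k hik =>
      inter_subset_left.trans (Set.biInter_subset_of_mem hik)
    have hex : ∀ x, {k | x ∉ A' k}.Nonempty := by
      intro x
      exact ⟨x, fun hx => lt_irrefl x hx.2⟩
    set g : ℕ → ℕ := fun x => sInf {k | x ∉ A' k} with hg
    obtain ⟨A, hA, hinj | ⟨c, hc⟩⟩ := hsel g
    · refine ⟨A, hA, fun k => ?_⟩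
      have hs : A \ As k ⊆ {x ∈ A | g x ≤ k} := by
        rintro x ⟨hxA, hxk⟩
        exact ⟨hxA, Nat.sInf_le (fun h' => hxk (hsub k k le_rfl h'))⟩
      refine Set.Finite.subset ?_ hs
      refine Set.Finite.of_finite_image ?_ (hinj.mono (Set.sep_subset _ _))
      refine (Set.finite_Iic k).subset ?_
      rintro _ ⟨x, ⟨_, hx⟩, rfl⟩
      exact hx
    · exfalso
      obtain ⟨x, hxA, hxA'⟩ := Filter.nonempty_of_mem (inter_mem hA (hA'mem c))
      have h1 : x ∉ A' (g x) := Nat.sInf_mem (hex x)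
      rw [hc x hxA] at h1
      exact h1 hxA'
  · refine ⟨{a}, Ultrafilter.mem_pure.2 rfl, fun k => ?_⟩
    exact (Set.finite_singleton a).subset diff_subset

/-- A finite-to-one image of a nonprincipal ultrafilter is nonprincipal. -/
lemma ufnp_map {V : Ultrafilter ℕ} (hnp : UFNP V) {h : ℕ → ℕ}
    (hfin : ∀ k, (h ⁻¹' {k}).Finite) : UFNP (Ultrafilter.map h V) := by
  intro s hs
  rw [Ultrafilter.mem_map] at hs
  by_contra hsf
  rw [Set.not_infinite] at hsf
  have : (h ⁻¹' s).Finite := by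
    have : h ⁻¹' s = ⋃ k ∈ s, h ⁻¹' {k} := by
      ext x; simp
    rw [this]
    exact Set.Finite.biUnion hsf (fun k _ => hfin k)
  exact ufnp_notMem hnp this hs

/-- If `h` is injective on a member of a nonprincipal ultrafilter `V`, then
`V` is isomorphic to its image. -/
lemma rk_iso_map {V : Ultrafilter ℕ} (hnp : UFNP V) {h : ℕ → ℕ} {A : Set ℕ}
    (hA : A ∈ V) (hinj : Set.InjOn h A) : RKIso V (Ultrafilter.map h V) := by
  classical
  have hAinf : A.Infinite := hnp A hA
  haveI : Infinite A := hAinf.to_subtype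
  haveI := Nat.Subtype.denumerable A
  let e := Denumerable.eqv A
  let u1 : ℕ → ℕ := fun k => (e.symm (2 * k) : ℕ)
  let u2 : ℕ → ℕ := fun k => (e.symm (2 * k + 1) : ℕ)
  have hu1 : Function.Injective u1 := by
    intro a b hab
    have := Subtype.val_injective hab
    have := e.symm.injective this
    omega
  have hu2 : Function.Injective u2 := by
    intro a b hab
    have := Subtype.val_injective hab
    have := e.symm.injective this
    omega
  have hA1s : Set.range u1 ⊆ A := by rintro _ ⟨k, rfl⟩; exact (e.symm (2 * k)).2
  have hA2s : Set.range u2 ⊆ A := by rintro _ ⟨k, rfl⟩; exact (e.symm (2 * k + 1)).2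
  have hA12 : A ⊆ Set.range u1 ∪ Set.range u2 := by
    intro x hx
    rcases Nat.even_or_odd (e ⟨x, hx⟩) with ⟨k, hk⟩ | ⟨k, hk⟩
    · left
      refine ⟨k, ?_⟩
      have : e.symm (2 * k) = ⟨x, hx⟩ := by
        rw [show 2 * k = (e ⟨x, hx⟩ : ℕ) by omega]
        exact e.symm_apply_apply _
      rw [show u1 k = ((e.symm (2*k) : A) : ℕ) from rfl, this]
    · right
      refine ⟨k, ?_⟩
      have : e.symm (2 * k + 1) = ⟨x, hx⟩ := by
        rw [show 2 * k + 1 = (e ⟨x, hx⟩ : ℕ) by omega]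
        exact e.symm_apply_apply _
      rw [show u2 k = ((e.symm (2*k+1) : A) : ℕ) from rfl, this]
  have hdisj12 : ∀ x, x ∈ Set.range u1 → x ∈ Set.range u2 → False := by
    rintro _ ⟨k, rfl⟩ ⟨j, hj⟩
    have := Subtype.val_injective hj
    have := e.symm.injective this
    omega
  have hone : Set.range u1 ∈ V ∨ Set.range u2 ∈ V :=
    Ultrafilter.union_mem_iff.1 (mem_of_superset hA hA12)
  obtain ⟨S, T, hS, hSA, hTA, hST, hTinf⟩ :
      ∃ S T : Set ℕ, S ∈ V ∧ S ⊆ A ∧ T ⊆ A ∧ (∀ x ∈ S, x ∉ T) ∧ T.Infinite := by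
    rcases hone with h1 | h2
    · exact ⟨Set.range u1, Set.range u2, h1, hA1s, hA2s, fun x hx hx' => hdisj12 x hx hx',
        Set.infinite_range_of_injective hu2⟩
    · exact ⟨Set.range u2, Set.range u1, h2, hA2s, hA1s, fun x hx hx' => hdisj12 x hx' hx,
        Set.infinite_range_of_injective hu1⟩
  have hSinj : Set.InjOn h S := hinj.mono hSA
  have hScinf : Sᶜ.Infinite := hTinf.mono (fun x hx hxS => hST x hxS hx)
  have himdis : ∀ y ∈ h '' T, y ∉ h '' S := by
    rintro _ ⟨t, ht, rfl⟩ ⟨s, hs, hse⟩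
    have := hinj (hSA hs) (hTA ht) hse
    exact hST s hs (this ▸ ht)
  have himcinf : (h '' S)ᶜ.Infinite :=
    (hTinf.image (hinj.mono hTA)).mono (fun y hy => himdis y hy)
  haveI : Infinite ↥(Sᶜ) := hScinf.to_subtype
  haveI : Infinite ↥((h '' S)ᶜ) := himcinf.to_subtype
  haveI := Nat.Subtype.denumerable (Sᶜ)
  haveI := Nat.Subtype.denumerable ((h '' S)ᶜ)
  let e2 : ↥S ≃ ↥(h '' S) := Set.BijOn.equiv h (Set.InjOn.bijOn_image hSinj)
  let e3 : ↥(Sᶜ) ≃ ↥((h '' S)ᶜ) := (Denumerable.eqv _).trans (Denumerable.eqv _).symm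
  let E : ℕ ≃ ℕ :=
    (Equiv.Set.sumCompl S).symm.trans ((e2.sumCongr e3).trans (Equiv.Set.sumCompl (h '' S)))
  have hE : ∀ x ∈ S, E x = h x := by
    intro x hx
    show (Equiv.Set.sumCompl (h '' S)) ((e2.sumCongr e3) ((Equiv.Set.sumCompl S).symm x)) = h x
    rw [Equiv.Set.sumCompl_symm_apply_of_mem hx]
    rfl
  refine ⟨E, ?_⟩
  apply Ultrafilter.coe_injective
  rw [Ultrafilter.coe_map, Ultrafilter.coe_map]
  exact Filter.map_congr (Filter.eventuallyEq_of_mem hS hE)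

/-- Key pairwise lemma: for nonisomorphic ultrafilters and finite-to-one maps we can
find members with disjoint images. -/
lemma rk_disj_images {V W : Ultrafilter ℕ} (hVW : ¬ RKIso V W)
    (hselV : IsSelective V) (hselW : IsSelective W)
    {h1 h2 : ℕ → ℕ} (hf1 : ∀ k, (h1 ⁻¹' {k}).Finite) (hf2 : ∀ k, (h2 ⁻¹' {k}).Finite) :
    ∃ B1 ∈ V, ∃ B2 ∈ W, ∀ y ∈ h1 '' B1, y ∉ h2 '' B2 := by
  obtain ⟨A1, hA1, hinj1⟩ := sel_qpoint hselV hf1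
  obtain ⟨A2, hA2, hinj2⟩ := sel_qpoint hselW hf2
  by_cases hPQ : Ultrafilter.map h1 V = Ultrafilter.map h2 W
  · exfalso
    apply hVW
    rcases ufnp_or_pure V with hnpV | ⟨a, rfl⟩
    · rcases ufnp_or_pure W with hnpW | ⟨b, rfl⟩
      · exact rk_trans (rk_iso_map hnpV hA1 hinj1)
          (hPQ ▸ rk_symm (rk_iso_map hnpW hA2 hinj2))
      · exfalso
        have hmem : {h2 b} ∈ Ultrafilter.map h1 V := by
          rw [hPQ, Ultrafilter.map_pure]
          exact Ultrafilter.mem_pure.2 rfl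
        rw [Ultrafilter.mem_map] at hmem
        exact ufnp_notMem hnpV (hf1 (h2 b)) hmem
    · have hmem : {h1 a} ∈ Ultrafilter.map h2 W := by
        rw [← hPQ, Ultrafilter.map_pure]
        exact Ultrafilter.mem_pure.2 rfl
      rw [Ultrafilter.mem_map] at hmem
      obtain ⟨b, _, hb⟩ := Ultrafilter.eq_pure_of_finite_mem (hf2 (h1 a)) hmem
      rw [hb]
      exact rk_pure a b
  · have hsep : ∃ s, s ∈ Ultrafilter.map h1 V ∧ sᶜ ∈ Ultrafilter.map h2 W := by
      by_contra hc
      push_neg at hc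
      apply hPQ
      apply Ultrafilter.coe_injective
      apply Filter.ext
      intro s
      constructor
      · intro hs
        by_contra hs2
        exact (hc s hs) (Ultrafilter.compl_mem_iff_notMem.2 hs2)
      · intro hs
        by_contra hs2
        have := hc sᶜ (Ultrafilter.compl_mem_iff_notMem.2 hs2)
        rw [compl_compl] at this
        exact this hs
    obtain ⟨s, hsP, hsQ⟩ := hsep
    rw [Ultrafilter.mem_map] at hsP hsQ
    refine ⟨A1 ∩ h1 ⁻¹' s, inter_mem hA1 hsP, A2 ∩ h2 ⁻¹' sᶜ, inter_mem hA2 hsQ, ?_⟩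
    rintro y ⟨x, ⟨_, hxs⟩, rfl⟩ ⟨z, ⟨_, hzs⟩, hz⟩
    exact hzs (hz ▸ hxs)

/-- Main combinatorial lemma. -/
lemma main_lemma (V : ℕ → Ultrafilter ℕ) (hVsel : ∀ n, IsSelective (V n))
    (hVV : ∀ m n, m ≠ n → ¬ RKIso (V m) (V n)) (A : Set ℕ)
    (hnp : ∀ n ∈ A, UFNP (V n))
    (f : ℕ × ℕ → ℕ) (hf : ∀ k, (f ⁻¹' {k}).Finite) :
    ∃ B : ℕ → Set ℕ, (∀ n, B n ∈ V n) ∧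
      ∀ p q : ℕ × ℕ, p.1 ∈ A → q.1 ∈ A → p.2 ∈ B p.1 → q.2 ∈ B q.1 → f p = f q → p = q := by
  classical
  set fn : ℕ → ℕ → ℕ := fun n m => f (n, m) with hfndef
  have hfnfin : ∀ n k, (fn n ⁻¹' {k}).Finite := by
    intro n k
    apply Set.Finite.of_finite_image (f := fun m => ((n, m) : ℕ × ℕ))
    · apply (hf k).subset
      rintro _ ⟨m, hm, rfl⟩
      exact hm
    · intro a _ b _ hab
      exact (Prod.mk.injEq _ _ _ _ ▸ hab).2
  choose A0 hA0 hinj0 using fun n => sel_qpoint (hVsel n) (hfnfin n)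
  have hD : ∀ n n', ∃ S T, S ∈ V n ∧ T ∈ V n' ∧
      (n ≠ n' → ∀ y ∈ fn n '' S, y ∉ fn n' '' T) := by
    intro n n'
    by_cases h : n = n'
    · exact ⟨Set.univ, Set.univ, univ_mem, univ_mem, fun hc => absurd h hc⟩
    · obtain ⟨B1, hB1, B2, hB2, hdis⟩ :=
        rk_disj_images (hVV n n' h) (hVsel n) (hVsel n') (hfnfin n) (hfnfin n')
      exact ⟨B1, B2, hB1, hB2, fun _ => hdis⟩
  choose D1 D2 hD1 hD2 hdis using hD
  set E : ℕ → ℕ → Set ℕ := fun n n' => A0 n ∩ (D1 n n' ∩ D2 n' n) with hEdef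
  have hEmem : ∀ n n', E n n' ∈ V n :=
    fun n n' => inter_mem (hA0 n) (inter_mem (hD1 n n') (hD2 n' n))
  choose B0 hB0 hB0fin using fun n => sel_ppoint (hVsel n) (E n) (hEmem n)
  set B : ℕ → Set ℕ := fun n => B0 n ∩ A0 n with hBdef
  have hBmem : ∀ n, B n ∈ V n := fun n => inter_mem (hB0 n) (hA0 n)
  have hBinj : ∀ n, Set.InjOn (fn n) (B n) := fun n => (hinj0 n).mono inter_subset_right
  have hK : ∀ n n', n ≠ n' → ((fn n '' B n) ∩ (fn n' '' B n')).Finite := by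
    intro n n' hne
    have hsub : (fn n '' B n) ∩ (fn n' '' B n') ⊆
        fn n '' (B n \ E n n') ∪ fn n' '' (B n' \ E n' n) := by
      rintro y ⟨⟨x, hx, rfl⟩, ⟨z, hz, hzy⟩⟩
      by_cases hxE : x ∈ E n n'
      · by_cases hzE : z ∈ E n' n
        · exact absurd ⟨z, hzE.2.2, hzy⟩ (hdis n n' hne _ ⟨x, hxE.2.1, rfl⟩)
        · exact Or.inr ⟨z, ⟨hz, hzE⟩, hzy⟩
      · exact Or.inl ⟨x, ⟨hx, hxE⟩, rfl⟩
    refine Set.Finite.subset (Set.Finite.union ?_ ?_) hsub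
    · exact (((hB0fin n n').subset (diff_subset_diff_left inter_subset_left)).image _)
    · exact (((hB0fin n' n).subset (diff_subset_diff_left inter_subset_left)).image _)
  set K : ℕ → Set ℕ := fun n => ⋃ j ∈ Set.Iio n, (fn j '' B j) ∩ (fn n '' B n) with hKdef
  have hKfin : ∀ n, (K n).Finite :=
    fun n => Set.Finite.biUnion (Set.finite_Iio n) (fun j hj => hK j n (Nat.ne_of_lt hj))
  set C : ℕ → Set ℕ := fun n => if n ∈ A then B n \ (fn n ⁻¹' K n) else B n with hCdef
  have hCsubB : ∀ n, C n ⊆ B n := by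
    intro n
    by_cases hn : n ∈ A
    · rw [hCdef]; simp only [if_pos hn]; exact diff_subset
    · rw [hCdef]; simp only [if_neg hn]; exact fun _ hx => hx
  have hCmem : ∀ n, C n ∈ V n := by
    intro n
    by_cases hn : n ∈ A
    · have hr : (B n ∩ fn n ⁻¹' K n).Finite := by
        refine Set.Finite.of_finite_image ?_ ((hBinj n).mono inter_subset_left)
        refine (hKfin n).subset ?_
        rintro _ ⟨x, ⟨_, hxK⟩, rfl⟩
        exact hxK
      have h2 : (B n ∩ fn n ⁻¹' K n)ᶜ ∈ V n :=
        Ultrafilter.compl_mem_iff_notMem.2 (ufnp_notMem (hnp n hn) hr)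
      have h3 := inter_mem (hBmem n) h2
      refine mem_of_superset h3 ?_
      rintro x ⟨hxB, hxc⟩
      rw [hCdef]; simp only [if_pos hn]
      exact ⟨hxB, fun hxK => hxc ⟨hxB, hxK⟩⟩
    · rw [hCdef]; simp only [if_neg hn]; exact hBmem n
  refine ⟨C, hCmem, ?_⟩
  rintro ⟨n, x⟩ ⟨n', y⟩ hn hn' hx hy hfe
  simp only at hn hn' hx hy
  have hfe' : fn n x = fn n' y := hfe
  rcases lt_trichotomy n n' with hlt | heq | hgt
  · exfalso
    have hy' : y ∈ B n' \ (fn n' ⁻¹' K n') := by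
      have := hy
      rw [hCdef] at this
      simpa only [if_pos hn'] using this
    apply hy'.2
    exact Set.mem_biUnion hlt ⟨⟨x, hCsubB n hx, hfe'⟩, ⟨y, hy'.1, rfl⟩⟩
  · subst heq
    have : x = y := (hBinj n) (hCsubB n hx) (hCsubB n hy) hfe'
    rw [this]
  · exfalso
    have hx' : x ∈ B n \ (fn n ⁻¹' K n) := by
      have := hx
      rw [hCdef] at this
      simpa only [if_pos hn] using this
    apply hx'.2
    exact Set.mem_biUnion hgt ⟨⟨y, hCsubB n' hy, hfe'.symm⟩, ⟨x, hx'.1, rfl⟩⟩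

theorem stmt3 (U : Ultrafilter ℕ) (V : ℕ → Ultrafilter ℕ)
    (hUsel : IsSelective U) (hVsel : ∀ n, IsSelective (V n))
    (hUV : ∀ n, ¬ RKIso U (V n))
    (hVV : ∀ m n, m ≠ n → ¬ RKIso (V m) (V n))
    (f : ℕ × ℕ → ℕ) (hf : ∀ k : ℕ, (f ⁻¹' {k}).Finite) :
    ∃ X ∈ sumUF U V, Set.InjOn f X := by
  classical
  have hcolfin : ∀ n k, ((fun m => f (n, m)) ⁻¹' {k}).Finite := by
    intro n k
    apply Set.Finite.of_finite_image (f := fun m => ((n, m) : ℕ × ℕ))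
    · apply (hf k).subset
      rintro _ ⟨m, hm, rfl⟩
      exact hm
    · intro a _ b _ hab
      exact (Prod.mk.injEq _ _ _ _ ▸ hab).2
  rcases ufnp_or_pure U with hnpU | ⟨a, rfl⟩
  · set A : Set ℕ := {n | UFNP (V n)} with hAdef
    have hAc : (Aᶜ : Set ℕ).Subsingleton := by
      intro n hn n' hn'
      by_contra hne
      obtain ⟨b, hb⟩ := (ufnp_or_pure (V n)).resolve_left hn
      obtain ⟨b', hb'⟩ := (ufnp_or_pure (V n')).resolve_left hn'
      exact (hVV n n' hne) (hb ▸ hb' ▸ rk_pure b b')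
    have hAU : A ∈ U := by
      have h1 : Aᶜ ∉ U := ufnp_notMem hnpU hAc.finite
      have h2 := Ultrafilter.compl_mem_iff_notMem.2 h1
      rwa [compl_compl] at h2
    obtain ⟨B, hB, hinj⟩ := main_lemma V hVsel hVV A (fun n hn => hn) f hf
    refine ⟨{p : ℕ × ℕ | p.1 ∈ A ∧ p.2 ∈ B p.1}, ?_, ?_⟩
    · show {n | {m | n ∈ A ∧ m ∈ B n} ∈ V n} ∈ U
      refine mem_of_superset hAU ?_
      intro n hn
      show {m | n ∈ A ∧ m ∈ B n} ∈ V n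
      have : {m | n ∈ A ∧ m ∈ B n} = B n := by
        ext m; simp [hn]
      rw [this]
      exact hB n
    · intro p hp q hq hfe
      exact hinj p q hp.1 hq.1 hp.2 hq.2 hfe
  · obtain ⟨Ba, hBa, hinja⟩ := sel_qpoint (hVsel a) (hcolfin a)
    refine ⟨{p : ℕ × ℕ | p.1 = a ∧ p.2 ∈ Ba}, ?_, ?_⟩
    · show {n | {m | n = a ∧ m ∈ Ba} ∈ V n} ∈ (pure a : Ultrafilter ℕ)
      refine Ultrafilter.mem_pure.2 ?_
      show {m | a = a ∧ m ∈ Ba} ∈ V a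
      have : {m | a = a ∧ m ∈ Ba} = Ba := by ext m; simp
      rw [this]
      exact hBa
    · rintro ⟨n, x⟩ ⟨hn, hx⟩ ⟨n', y⟩ ⟨hn', hy⟩ hfe
      simp only at hn hn' hx hy
      subst hn; subst hn'
      have : x = y := hinja hx hy hfe
      rw [this]
end

section
/- Let U and V_n (n ∈ ℕ) be pairwise non-isomorphic selective ultrafilters on ℕ and let W = U-∑_n V_n. If X is a non-principal ultrafilter on ℕ with X ≤_RK W and not X ≡_RK W, then X ≡_RK U. That is, the only non-principal ultrafilters strictly below W in the Rudin-Keisler ordering are the isomorphic copies of U. -/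
/-- Rudin–Keisler reducibility: `F ≤_RK G` iff there is `f : β → α` such that
for every `a ⊆ α`, `a ∈ F ↔ f ⁻¹' a ∈ G`. -/
def RKle {α β : Type*} (F : Ultrafilter α) (G : Ultrafilter β) : Prop :=
  ∃ f : β → α, ∀ a : Set α, a ∈ F ↔ f ⁻¹' a ∈ G

/-- Rudin–Keisler equivalence. -/
def RKequiv {α β : Type*} (F : Ultrafilter α) (G : Ultrafilter β) : Prop :=
  RKle F G ∧ RKle G F

open Set Function

lemma mem_congr_of_mem {α} (F : Ultrafilter α) {S u v : Set α} (hS : S ∈ F)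
    (h : ∀ n ∈ S, n ∈ u ↔ n ∈ v) : u ∈ F ↔ v ∈ F := by
  constructor
  · intro hu
    exact Filter.mem_of_superset (Filter.inter_mem hu hS) fun x ⟨hxu, hxS⟩ => (h x hxS).1 hxu
  · intro hv
    exact Filter.mem_of_superset (Filter.inter_mem hv hS) fun x ⟨hxv, hxS⟩ => (h x hxS).2 hxv

lemma uf_dichotomy {α} (F : Ultrafilter α) :
    (∃ p, ∀ a : Set α, a ∈ F ↔ p ∈ a) ∨ (∀ A ∈ F, Set.Infinite A) := by
  rcases F.le_cofinite_or_eq_pure with h | ⟨p, hp⟩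
  · right
    intro A hA
    by_contra hfin
    rw [Set.not_infinite] at hfin
    have : Aᶜ ∈ F := h hfin.compl_mem_cofinite
    exact (Ultrafilter.compl_mem_iff_notMem.mp this) hA
  · left
    exact ⟨p, fun a => by rw [hp]; exact Ultrafilter.mem_pure⟩

lemma compl_mem_of_finite {α} (F : Ultrafilter α) (hnp : ∀ A ∈ F, Set.Infinite A)
    {s : Set α} (hs : s.Finite) : sᶜ ∈ F :=
  Ultrafilter.compl_mem_iff_notMem.mpr fun h => (hnp s h) hs

lemma rkequiv_of_injOn {α β} (X : Ultrafilter α) (G : Ultrafilter β) (g : β → α)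
    (hmap : ∀ a : Set α, a ∈ X ↔ g ⁻¹' a ∈ G) {A : Set β} (hA : A ∈ G)
    (hinj : Set.InjOn g A) : RKequiv X G := by
  haveI : Nonempty β := Filter.nonempty_of_neBot (G : Filter β)
  refine ⟨⟨g, hmap⟩, ⟨Function.invFunOn g A, fun b => ?_⟩⟩
  have key : g ⁻¹' (Function.invFunOn g A ⁻¹' b) ∈ G ↔ b ∈ G := by
    refine mem_congr_of_mem G hA fun x hx => ?_
    simp only [Set.mem_preimage]
    rw [hinj.leftInvOn_invFunOn hx]
  rw [hmap, key]

lemma iso_of_injOn_map (F G : Ultrafilter ℕ) (h : ℕ → ℕ)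
    (hmap : ∀ a : Set ℕ, a ∈ G ↔ h ⁻¹' a ∈ F) {A : Set ℕ} (hA : A ∈ F)
    (hinj : Set.InjOn h A) : RKIso F G := by
  classical
  rcases uf_dichotomy F with ⟨p, hp⟩ | hinf
  · refine ⟨Equiv.swap p (h p), ?_⟩
    ext a
    rw [Ultrafilter.mem_map, hp, hmap, hp]
    simp [Equiv.swap_apply_left]
  · have hAinf : A.Infinite := hinf A hA
    set u : ℕ ↪ ↑A := hAinf.natEmbedding A
    set A2 : Set ℕ := Set.range (fun k => ((u (2 * k) : A) : ℕ)) with hA2def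
    have hA2sub : A2 ⊆ A := by rintro x ⟨k, rfl⟩; exact (u (2 * k)).2
    have hA2inf : A2.Infinite := Set.infinite_range_of_injective (by
      intro a b hab
      have := u.injective (Subtype.ext hab)
      omega)
    have hAd2 : (A \ A2).Infinite := by
      have hri : (Set.range (fun k => ((u (2 * k + 1) : A) : ℕ))).Infinite := by
        apply Set.infinite_range_of_injective
        intro a b hab
        have := u.injective (Subtype.ext hab)
        omega
      apply hri.mono
      rintro x ⟨k, rfl⟩
      refine ⟨(u (2 * k + 1)).2, ?_⟩
      rintro ⟨j, hj⟩
      have := u.injective (Subtype.ext hj)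
      omega
    obtain ⟨A1, hA1F, hA1sub, hA1d⟩ :
        ∃ A1, A1 ∈ F ∧ A1 ⊆ A ∧ (A \ A1).Infinite := by
      have hsplit : (A ∩ A2) ∪ (A \ A2) = A := by
        ext x; by_cases hx : x ∈ A2 <;> simp [hx] <;> tauto
      rcases (Ultrafilter.union_mem_iff).mp (by rw [hsplit]; exact hA) with h1 | h1
      · exact ⟨A ∩ A2, h1, Set.inter_subset_left, by
          apply hAd2.mono; intro x hx; exact ⟨hx.1, fun h' => hx.2 h'.2⟩⟩
      · refine ⟨A \ A2, h1, Set.diff_subset, ?_⟩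
        apply hA2inf.mono
        intro x hx
        exact ⟨hA2sub hx, fun h' => h'.2 hx⟩
    have hinj1 : Set.InjOn h A1 := hinj.mono hA1sub
    have hc1 : (A1ᶜ).Infinite := hA1d.mono fun x hx => hx.2
    have hc2 : ((h '' A1)ᶜ).Infinite := by
      apply (hA1d.image (hinj.mono Set.diff_subset)).mono
      rintro y ⟨x, hx, rfl⟩ ⟨x', hx', hxx'⟩
      exact hx.2 (hinj (hA1sub hx') hx.1 hxx' ▸ hx')
    haveI := hc1.to_subtype
    haveI := hc2.to_subtype
    obtain ⟨d1⟩ := nonempty_denumerable ↥(A1ᶜ)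
    obtain ⟨d2⟩ := nonempty_denumerable ↥((h '' A1)ᶜ)
    let φ : ↥(A1ᶜ) ≃ ↥((h '' A1)ᶜ) := (Denumerable.eqv _).trans (Denumerable.eqv _).symm
    let e0 : ℕ → ℕ := fun x => if hx : x ∈ A1 then h x else (φ ⟨x, hx⟩ : ℕ)
    have he0_in : ∀ x (hx : x ∈ A1), e0 x = h x := fun x hx => dif_pos hx
    have he0_out : ∀ x (hx : x ∉ A1), e0 x = (φ ⟨x, hx⟩ : ℕ) := fun x hx => dif_neg hx
    have hbij : Function.Bijective e0 := by
      constructor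
      · intro x y hxy
        by_cases hx : x ∈ A1 <;> by_cases hy : y ∈ A1
        · rw [he0_in x hx, he0_in y hy] at hxy
          exact hinj1 hx hy hxy
        · rw [he0_in x hx, he0_out y hy] at hxy
          exact absurd (hxy ▸ Set.mem_image_of_mem h hx) (φ ⟨y, hy⟩).2
        · rw [he0_out x hx, he0_in y hy] at hxy
          exact absurd (hxy ▸ (φ ⟨x, hx⟩).2) (fun hc => hc (Set.mem_image_of_mem h hy))
        · rw [he0_out x hx, he0_out y hy] at hxy
          have := φ.injective (Subtype.ext hxy)
          exact Subtype.ext_iff.mp this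
      · intro y
        by_cases hy : y ∈ h '' A1
        · obtain ⟨x, hx, rfl⟩ := hy
          exact ⟨x, he0_in x hx⟩
        · refine ⟨(φ.symm ⟨y, hy⟩ : ℕ), ?_⟩
          have hz : ((φ.symm ⟨y, hy⟩ : ↥(A1ᶜ)) : ℕ) ∉ A1 := (φ.symm ⟨y, hy⟩).2
          rw [he0_out _ hz]
          rw [show (⟨_, hz⟩ : ↥(A1ᶜ)) = φ.symm ⟨y, hy⟩ from Subtype.ext rfl]
          rw [φ.apply_symm_apply]
    refine ⟨Equiv.ofBijective e0 hbij, ?_⟩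
    ext a
    rw [Ultrafilter.mem_map]
    have he : ⇑(Equiv.ofBijective e0 hbij) = e0 := rfl
    rw [he]
    rw [show (e0 ⁻¹' a ∈ F ↔ h ⁻¹' a ∈ F) from
      mem_congr_of_mem F hA1F fun x hx => by simp [Set.mem_preimage, he0_in x hx]]
    exact (hmap a).symm

lemma diag_lemma (U : Ultrafilter ℕ) (hsel : IsSelective U)
    (hnp : ∀ A ∈ U, Set.Infinite A) (G : ℕ → Set ℕ) (hG : ∀ n, G n ∈ U) :
    ∃ D ∈ U, ∀ k ∈ D, ∀ m ∈ D, k < m → m ∈ G k := by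
  classical
  -- decreasing refinement
  let G' : ℕ → Set ℕ := fun n => Nat.rec (G 0 ∩ {m | 0 < m})
    (fun n ih => ih ∩ G (n + 1) ∩ {m | n + 1 < m}) n
  have hG'succ : ∀ n, G' (n + 1) = G' n ∩ G (n + 1) ∩ {m | n + 1 < m} := fun n => rfl
  have hIicU : ∀ n : ℕ, {m | n < m} ∈ U := by
    intro n
    have : {m | n < m} = (Set.Iic n)ᶜ := by ext x; simp [Set.mem_Iic, not_le]
    rw [this]
    exact compl_mem_of_finite U hnp (Set.finite_Iic n)
  have hG'U : ∀ n, G' n ∈ U := by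
    intro n
    induction n with
    | zero => exact Filter.inter_mem (hG 0) (hIicU 0)
    | succ n ih =>
        rw [hG'succ]
        exact Filter.inter_mem (Filter.inter_mem ih (hG (n + 1))) (hIicU (n + 1))
  have hG'anti : ∀ k n, k ≤ n → G' n ⊆ G' k := by
    intro k n hkn
    induction n with
    | zero => have : k = 0 := Nat.le_zero.mp hkn; subst this; exact subset_rfl
    | succ n ih =>
        rcases Nat.lt_or_ge k (n + 1) with hk | hk
        · intro x hx
          exact ih (Nat.lt_succ_iff.mp hk) (by rw [hG'succ] at hx; exact hx.1.1)
        · have : k = n + 1 := le_antisymm hkn hk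
          subst this; exact subset_rfl
  have hG'G : ∀ n, G' n ⊆ G n := by
    intro n
    cases n with
    | zero => exact fun x hx => hx.1
    | succ n => exact fun x hx => hx.1.2
  have hG'gt : ∀ n, ∀ m ∈ G' n, n < m := by
    intro n
    cases n with
    | zero => exact fun m hm => hm.2
    | succ n => exact fun m hm => hm.2
  -- the rank function
  haveI : ∀ (m n : ℕ), Decidable (m ∉ G' n) := fun m n => Classical.dec _
  have hex : ∀ m, ∃ n, m ∉ G' n := fun m => ⟨m, fun hc => lt_irrefl m (hG'gt m m hc)⟩
  let f : ℕ → ℕ := fun m => Nat.find (hex m)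
  have hf_iff : ∀ n m, m ∈ G' n ↔ n < f m := by
    intro n m
    constructor
    · intro hm
      by_contra hc
      exact (Nat.find_spec (hex m)) (hG'anti (f m) n (not_lt.mp hc) hm)
    · intro hn
      by_contra hc
      exact absurd (Nat.find_min (hex m) hn) (by simpa using hc)
  -- selectivity on f : injective on some A
  obtain ⟨A, hAU, hio⟩ := hsel f
  have hAinj : Set.InjOn f A := by
    rcases hio with h | ⟨c, hc⟩
    · exact h
    · exfalso
      obtain ⟨m, hmA, hmG⟩ := Ultrafilter.nonempty_of_mem
        (Filter.inter_mem hAU (hG'U c) : A ∩ G' c ∈ U)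
      have h1 : c < f m := (hf_iff c m).mp hmG
      rw [hc m hmA] at h1
      exact lt_irrefl c h1
  -- bound function F
  let Fb : ℕ → ℕ := fun n => sSup {m | m ∈ A ∧ f m ≤ n}
  have hFb : ∀ n, ∀ m ∈ A, f m ≤ n → m ≤ Fb n := by
    intro n m hmA hfm
    have hfin : {m | m ∈ A ∧ f m ≤ n}.Finite := by
      apply Set.Finite.of_finite_image (f := f)
      · exact (Set.finite_Iic n).subset (by rintro y ⟨x, ⟨_, hx⟩, rfl⟩; exact hx)
      · exact hAinj.mono fun x hx => hx.1
    exact le_csSup hfin.bddAbove ⟨hmA, hfm⟩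
  -- interval endpoints
  let b : ℕ → ℕ := fun k => Nat.rec 0 (fun _ ih => max (Fb ih) ih + 1) k
  have hbsucc : ∀ k, b (k + 1) = max (Fb (b k)) (b k) + 1 := fun k => rfl
  have hbmono : StrictMono b := strictMono_nat_of_lt_succ (fun k => by
    rw [hbsucc]; omega)
  have hbkey : ∀ k, ∀ m ∈ A, b (k + 1) ≤ m → b k < f m := by
    intro k m hmA hm
    by_contra hc
    have := hFb (b k) m hmA (not_lt.mp hc)
    rw [hbsucc] at hm
    omega
  -- interval index
  haveI : ∀ (k m : ℕ), Decidable (b k ≤ m) := fun k m => Nat.decLe _ _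
  let idx : ℕ → ℕ := fun m => @Nat.findGreatest (fun k => b k ≤ m) (fun k => Nat.decLe _ _) m
  have hidx1 : ∀ m, b (idx m) ≤ m := by
    intro m
    have h0 : b 0 ≤ m := Nat.zero_le m
    exact @Nat.findGreatest_spec 0 (fun k => b k ≤ m) (fun k => Nat.decLe _ _) m (Nat.zero_le m) h0
  have hidx2 : ∀ m, m < b (idx m + 1) := by
    intro m
    rcases Nat.lt_or_ge m (idx m + 1) with h | h
    · calc m < idx m + 1 := h
        _ ≤ b (idx m + 1) := (hbmono.le_apply)
    · by_contra hc
      exact @Nat.findGreatest_is_greatest (idx m + 1) (fun k => b k ≤ m)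
        (fun k => Nat.decLe _ _) m (Nat.lt_succ_self _) h (not_lt.mp hc)
  have hidxmono : ∀ n m, n ≤ m → idx n ≤ idx m := by
    intro n m hnm
    have h1 : idx n ≤ n := @Nat.findGreatest_le (fun k => b k ≤ n) (fun k => Nat.decLe _ _) n
    exact @Nat.le_findGreatest (idx n) (fun k => b k ≤ m) (fun k => Nat.decLe _ _) m
      (le_trans h1 hnm) (le_trans (hidx1 n) hnm)
  -- key step
  have hkeystep : ∀ n m, m ∈ A → idx n + 1 < idx m → n < f m := by
    intro n m hmA hlt
    have h1 : n < b (idx n + 1) := hidx2 n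
    have h2 : b (idx n + 1 + 1) ≤ b (idx m) := hbmono.monotone (show idx n + 1 + 1 ≤ idx m by omega)
    have h3 : b (idx m) ≤ m := hidx1 m
    have h4 : b (idx n + 1) < f m := hbkey (idx n + 1) m hmA (by omega)
    have h5 : b (idx n + 1) ≤ b (idx n + 1 + 1) := hbmono.monotone (show idx n + 1 ≤ idx n + 1 + 1 by omega)
    omega
  -- selectivity on halved indices
  have hhalf : ∀ g : ℕ → ℕ, (∀ m, idx m ≤ g m * 2 + 1) → (∀ m k, g m = k → idx m ≤ 2 * k + 1) →
      True := fun _ _ _ => trivial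
  obtain ⟨B1, hB1U, hB1io⟩ := hsel (fun m => idx m / 2)
  obtain ⟨B2, hB2U, hB2io⟩ := hsel (fun m => (idx m + 1) / 2)
  have noconst : ∀ (c : ℕ) (B : Set ℕ), B ∈ U → (∀ m ∈ B, idx m ≤ 2 * c + 1) → False := by
    intro c B hBU hBle
    have hBsub : B ⊆ Set.Iio (b (2 * c + 2)) := by
      intro m hm
      have h1 : m < b (idx m + 1) := hidx2 m
      have h2 : b (idx m + 1) ≤ b (2 * c + 2) := hbmono.monotone
        (show idx m + 1 ≤ 2 * c + 2 by have := hBle m hm; omega)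
      exact lt_of_lt_of_le h1 h2
    exact hnp B hBU ((Set.finite_Iio _).subset hBsub)
  have hB1inj : Set.InjOn (fun m => idx m / 2) B1 := by
    rcases hB1io with h | ⟨c, hc⟩
    · exact h
    · exact absurd (noconst c B1 hB1U (fun m hm => by
        have h2 : idx m / 2 = c := hc m hm
        omega)) (fun h => h)
  have hB2inj : Set.InjOn (fun m => (idx m + 1) / 2) B2 := by
    rcases hB2io with h | ⟨c, hc⟩
    · exact h
    · exact absurd (noconst c B2 hB2U (fun m hm => by
        have h2 : (idx m + 1) / 2 = c := hc m hm
        omega)) (fun h => h)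
  refine ⟨A ∩ B1 ∩ B2, Filter.inter_mem (Filter.inter_mem hAU hB1U) hB2U, ?_⟩
  rintro k ⟨⟨hkA, hkB1⟩, hkB2⟩ m ⟨⟨hmA, hmB1⟩, hmB2⟩ hkm
  have hidxle : idx k ≤ idx m := hidxmono k m (le_of_lt hkm)
  have hgap : idx k + 1 < idx m := by
    by_contra hc
    push_neg at hc
    have hcase : idx m = idx k ∨ idx m = idx k + 1 := by omega
    rcases hcase with he | he
    · exact absurd (hB1inj hkB1 hmB1 (by show idx k / 2 = idx m / 2; omega)) (by omega)
    · rcases Nat.even_or_odd (idx k) with ⟨j, hj⟩ | ⟨j, hj⟩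
      · exact absurd (hB1inj hkB1 hmB1 (by show idx k / 2 = idx m / 2; omega)) (by omega)
      · exact absurd (hB2inj hkB2 hmB2 (by show (idx k + 1) / 2 = (idx m + 1) / 2; omega))
          (by omega)
  exact hG'G k ((hf_iff k m).mpr (hkeystep k m hmA hgap))

theorem stmt4 (U : Ultrafilter ℕ) (V : ℕ → Ultrafilter ℕ)
    (hUsel : IsSelective U) (hVsel : ∀ n, IsSelective (V n))
    (hUV : ∀ n, ¬ RKIso U (V n))
    (hVV : ∀ m n, m ≠ n → ¬ RKIso (V m) (V n))
    (X : Ultrafilter ℕ) (hXnp : ∀ A ∈ X, Set.Infinite A)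
    (hle : RKle X (sumUF U V)) (hne : ¬ RKequiv X (sumUF U V)) :
    RKequiv X U := by
  classical
  obtain ⟨f, hf⟩ := hle
  have memW : ∀ a : Set (ℕ × ℕ), a ∈ sumUF U V ↔ {n | {m | (n, m) ∈ a} ∈ V n} ∈ U :=
    fun a => Iff.rfl
  have hVch : ∀ n, ∃ A ∈ V n, Set.InjOn (fun m => f (n, m)) A ∨ ∃ c, ∀ a ∈ A, f (n, a) = c :=
    fun n => hVsel n (fun m => f (n, m))
  choose A hA hio using hVch
  set S : Set ℕ := {n | ∃ c, ∀ m ∈ A n, f (n, m) = c} with hSdef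
  by_cases hS : S ∈ U
  · -- constant case : X ≡ U
    let g : ℕ → ℕ := fun n => if h : ∃ c, ∀ m ∈ A n, f (n, m) = c then h.choose else 0
    have hg : ∀ n ∈ S, ∀ m ∈ A n, f (n, m) = g n := by
      intro n hn m hm
      have hc : ∃ c, ∀ m ∈ A n, f (n, m) = c := hn
      have : g n = hc.choose := dif_pos hc
      rw [this]
      exact hc.choose_spec m hm
    have hXU : ∀ a : Set ℕ, a ∈ X ↔ g ⁻¹' a ∈ U := by
      intro a
      rw [hf a, memW]
      refine mem_congr_of_mem U hS fun n hn => ?_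
      simp only [Set.mem_setOf_eq, Set.mem_preimage]
      constructor
      · intro hv
        by_contra hga
        obtain ⟨m, hm1, hm2⟩ := Ultrafilter.nonempty_of_mem (Filter.inter_mem hv (hA n))
        exact hga (hg n hn m hm2 ▸ hm1)
      · intro hga
        refine Filter.mem_of_superset (hA n) fun m hm => ?_
        show f (n, m) ∈ a
        rw [hg n hn m hm]
        exact hga
    obtain ⟨B, hBU, hBio⟩ := hUsel g
    rcases hBio with hinj | ⟨c, hc⟩
    · exact rkequiv_of_injOn X U g hXU hBU hinj
    · exfalso
      have : ({c} : Set ℕ) ∈ X :=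
        (hXU {c}).mpr (Filter.mem_of_superset hBU fun b hb => hc b hb)
      exact (hXnp _ this) (Set.finite_singleton c)
  · -- injective case : contradiction with hne
    exfalso
    apply hne
    have hT : Sᶜ ∈ U := Ultrafilter.compl_mem_iff_notMem.mpr hS
    have hTinj : ∀ n, n ∉ S → Set.InjOn (fun m => f (n, m)) (A n) := by
      intro n hn
      rcases hio n with h | h
      · exact h
      · exact absurd h hn
    rcases uf_dichotomy U with ⟨p, hp⟩ | hnpU
    · -- principal U
      have hpT : p ∉ S := fun hpS => hS ((hp S).mpr hpS)
      have hΩW : {q : ℕ × ℕ | q.1 = p ∧ q.2 ∈ A p} ∈ sumUF U V := by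
        rw [memW]
        refine (hp _).mpr ?_
        show {m | (p, m) ∈ _} ∈ V p
        have he : {m | (p, m) ∈ {q : ℕ × ℕ | q.1 = p ∧ q.2 ∈ A p}} = A p := by
          ext m; simp
        rw [he]
        exact hA p
      have hinjΩ : Set.InjOn f {q : ℕ × ℕ | q.1 = p ∧ q.2 ∈ A p} := by
        intro q hq q' hq' hfe
        obtain ⟨hq1, hq2⟩ := hq
        obtain ⟨hq1', hq2'⟩ := hq'
        have e1 : (p, q.2) = q := Prod.ext_iff.mpr ⟨hq1.symm, rfl⟩
        have e1' : (p, q'.2) = q' := Prod.ext_iff.mpr ⟨hq1'.symm, rfl⟩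
        have hfe' : f (p, q.2) = f (p, q'.2) := by rw [e1, e1']; exact hfe
        have h2 : q.2 = q'.2 := hTinj p hpT hq2 hq2' hfe'
        exact Prod.ext_iff.mpr ⟨hq1.trans hq1'.symm, h2⟩
      exact rkequiv_of_injOn X (sumUF U V) f hf hΩW hinjΩ
    · -- nonprincipal U
      set Peq : ℕ → Prop := fun n => ∀ a : Set ℕ, {m | f (n, m) ∈ a} ∈ V n ↔ a ∈ X
        with hPeqdef
      set P : Set ℕ := {n | n ∉ S ∧ Peq n} with hPdef
      have hPsub : ∀ m n, m ∈ P → n ∈ P → m = n := by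
        intro m n hm hn
        by_contra hmn
        apply hVV m n hmn
        have hfmI : Set.InjOn (fun x => f (m, x)) (A m) := hTinj m hm.1
        have hfnI : Set.InjOn (fun y => f (n, y)) (A n) := hTinj n hn.1
        have himg : (fun y => f (n, y)) '' A n ∈ X := by
          refine (hn.2 _).mp ?_
          exact Filter.mem_of_superset (hA n) fun y hy => ⟨y, hy, rfl⟩
        have hAst : A m ∩ (fun x => f (m, x)) ⁻¹' ((fun y => f (n, y)) '' A n) ∈ V m :=
          Filter.inter_mem (hA m) ((hm.2 _).mpr himg)
        set h : ℕ → ℕ :=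
          fun x => Function.invFunOn (fun y => f (n, y)) (A n) (f (m, x)) with hhdef
        have hhx : ∀ x, x ∈ A m ∩ (fun x => f (m, x)) ⁻¹' ((fun y => f (n, y)) '' A n) →
            h x ∈ A n ∧ f (n, h x) = f (m, x) := by
          intro x hx
          obtain ⟨y, hy, hye⟩ := hx.2
          have hex : ∃ a ∈ A n, (fun y => f (n, y)) a = f (m, x) := ⟨y, hy, hye⟩
          constructor
          · exact Function.invFunOn_mem (f := fun y => f (n, y)) (s := A n) hex
          · exact Function.invFunOn_eq (f := fun y => f (n, y)) (s := A n) hex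
        have hinjh : Set.InjOn h
            (A m ∩ (fun x => f (m, x)) ⁻¹' ((fun y => f (n, y)) '' A n)) := by
          intro x hx x' hx' he
          apply hfmI hx.1 hx'.1
          show f (m, x) = f (m, x')
          rw [← (hhx x hx).2, ← (hhx x' hx').2, he]
        have hmap : ∀ b : Set ℕ, b ∈ V n ↔ h ⁻¹' b ∈ V m := by
          intro b
          have step1 : b ∈ V n ↔ b ∩ A n ∈ V n :=
            mem_congr_of_mem (V n) (hA n) fun y hy => ⟨fun hb => ⟨hb, hy⟩, And.left⟩
          have step2 : b ∩ A n ∈ V n ↔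
              {y | f (n, y) ∈ (fun y => f (n, y)) '' (b ∩ A n)} ∈ V n := by
            refine mem_congr_of_mem (V n) (hA n) fun y hy => ?_
            constructor
            · intro hyb
              exact ⟨y, hyb, rfl⟩
            · rintro ⟨y', hy', hye⟩
              have heq : y' = y := hfnI hy'.2 hy hye
              exact heq ▸ hy'
          have step3 : {y | f (n, y) ∈ (fun y => f (n, y)) '' (b ∩ A n)} ∈ V n ↔
              (fun y => f (n, y)) '' (b ∩ A n) ∈ X := hn.2 _
          have step4 : (fun y => f (n, y)) '' (b ∩ A n) ∈ X ↔
              {x | f (m, x) ∈ (fun y => f (n, y)) '' (b ∩ A n)} ∈ V m := (hm.2 _).symm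
          have step5 : {x | f (m, x) ∈ (fun y => f (n, y)) '' (b ∩ A n)} ∈ V m ↔
              h ⁻¹' b ∈ V m := by
            refine mem_congr_of_mem (V m) hAst fun x hx => ?_
            constructor
            · rintro ⟨y, hy, hye⟩
              have h1 : f (n, h x) = f (n, y) := (hhx x hx).2.trans hye.symm
              have h2 : h x = y := hfnI (hhx x hx).1 hy.2 h1
              show h x ∈ b
              rw [h2]
              exact hy.1
            · intro hb
              exact ⟨h x, ⟨hb, (hhx x hx).1⟩, (hhx x hx).2⟩
          rw [step1, step2, step3, step4, step5]
        exact iso_of_injOn_map (V m) (V n) h hmap hAst hinjh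
      have hPfin : P.Finite := Set.Subsingleton.finite (fun a ha b hb => hPsub a b ha hb)
      have hT0 : Sᶜ ∩ Pᶜ ∈ U := Filter.inter_mem hT (compl_mem_of_finite U hnpU hPfin)
      have hCex : ∀ n, ∃ Cn : Set ℕ,
          (n ∈ Sᶜ ∩ Pᶜ → ({y | f (n, y) ∈ Cn} ∈ V n ∧ Cn ∉ X)) ∧
          (n ∉ Sᶜ ∩ Pᶜ → Cn = ∅) := by
        intro n
        by_cases hn : n ∈ Sᶜ ∩ Pᶜ
        · have hnPeq : ¬ Peq n := fun hpe => hn.2 ⟨hn.1, hpe⟩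
          obtain ⟨a, ha⟩ := not_forall.mp hnPeq
          by_cases hL : {m | f (n, m) ∈ a} ∈ V n
          · refine ⟨a, fun _ => ⟨hL, fun hR => ha ⟨fun _ => hR, fun _ => hL⟩⟩, fun h => absurd hn h⟩
          · have hR : a ∈ X := by
              by_contra hna
              exact ha ⟨fun h => absurd h hL, fun h => absurd h hna⟩
            refine ⟨aᶜ, fun _ => ⟨?_, ?_⟩, fun h => absurd hn h⟩
            · have : {y | f (n, y) ∈ aᶜ} = {m | f (n, m) ∈ a}ᶜ := by
                ext y; simp
              rw [this]
              exact Ultrafilter.compl_mem_iff_notMem.mpr hL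
            · exact fun h => (Ultrafilter.compl_mem_iff_notMem.mp h) hR
        · exact ⟨∅, fun h => absurd h hn, fun _ => rfl⟩
      choose C hC1 hC2 using hCex
      set Gs : ℕ → Set ℕ := fun k => {j | {y | f (j, y) ∈ (C k)ᶜ} ∈ V j} with hGsdef
      have hGs : ∀ k, Gs k ∈ U := by
        intro k
        by_cases hk : k ∈ Sᶜ ∩ Pᶜ
        · have h1 : (C k)ᶜ ∈ X := Ultrafilter.compl_mem_iff_notMem.mpr (hC1 k hk).2
          exact (memW _).mp ((hf ((C k)ᶜ)).mp h1)
        · have : Gs k = Set.univ := by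
            ext j
            simp [hGsdef, hC2 k hk]
            exact Filter.univ_mem
          rw [this]
          exact Filter.univ_mem
      obtain ⟨D, hDU, hD⟩ := diag_lemma U hUsel hnpU Gs hGs
      set D' : Set ℕ := D ∩ (Sᶜ ∩ Pᶜ) with hD'def
      have hD'U : D' ∈ U := Filter.inter_mem hDU hT0
      have hthird : ∀ n ∈ D', {y | ∀ k, k ∈ D' → k < n → f (n, y) ∈ (C k)ᶜ} ∈ V n := by
        intro n hn
        have hstep : ∀ N, {y | ∀ k, k ∈ D' → k < n → k < N → f (n, y) ∈ (C k)ᶜ} ∈ V n := by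
          intro N
          induction N with
          | zero =>
              refine Filter.mem_of_superset Filter.univ_mem fun y _ k _ _ hk0 => ?_
              exact absurd hk0 (Nat.not_lt_zero k)
          | succ N ih =>
              have hZ : {y | N ∈ D' → N < n → f (n, y) ∈ (C N)ᶜ} ∈ V n := by
                by_cases hND : N ∈ D' ∧ N < n
                · have hGm : n ∈ Gs N := hD N hND.1.1 n hn.1 hND.2
                  exact Filter.mem_of_superset hGm fun y hy _ _ => hy
                · refine Filter.mem_of_superset Filter.univ_mem fun y _ h1 h2 => ?_
                  exact absurd ⟨h1, h2⟩ hND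
              refine Filter.mem_of_superset (Filter.inter_mem ih hZ) ?_
              rintro y ⟨h1, h2⟩ k hk1 hk2 hk3
              rcases Nat.lt_or_ge k N with hlt | hge
              · exact h1 k hk1 hk2 hlt
              · have : k = N := by omega
                subst this
                exact h2 hk1 hk2
        exact Filter.mem_of_superset (hstep n) fun y hy k hk1 hk2 => hy k hk1 hk2 hk2
      have hE : ∀ n ∈ D',
          A n ∩ {y | f (n, y) ∈ C n} ∩ {y | ∀ k, k ∈ D' → k < n → f (n, y) ∈ (C k)ᶜ}
            ∈ V n := by
        intro n hn
        exact Filter.inter_mem (Filter.inter_mem (hA n) (hC1 n hn.2).1) (hthird n hn)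
      set Ω : Set (ℕ × ℕ) := {q | q.1 ∈ D' ∧
        q.2 ∈ A q.1 ∩ {y | f (q.1, y) ∈ C q.1} ∩
          {y | ∀ k, k ∈ D' → k < q.1 → f (q.1, y) ∈ (C k)ᶜ}} with hΩdef
      have hΩW : Ω ∈ sumUF U V := by
        rw [memW]
        refine Filter.mem_of_superset hD'U fun n hn => ?_
        show {m | (n, m) ∈ Ω} ∈ V n
        have he : {m | (n, m) ∈ Ω} =
            A n ∩ {y | f (n, y) ∈ C n} ∩ {y | ∀ k, k ∈ D' → k < n → f (n, y) ∈ (C k)ᶜ} := by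
          ext m
          simp only [hΩdef, Set.mem_setOf_eq]
          exact ⟨fun h => h.2, fun h => ⟨hn, h⟩⟩
        rw [he]
        exact hE n hn
      have hinjΩ : Set.InjOn f Ω := by
        rintro ⟨n, y⟩ ⟨hn, hy⟩ ⟨n', y'⟩ ⟨hn', hy'⟩ hfe
        simp only at hn hn' hy hy' hfe
        rcases lt_trichotomy n n' with hlt | heq | hgt
        · exfalso
          have h1 : f (n, y) ∈ C n := hy.1.2
          have h2 : f (n', y') ∈ (C n)ᶜ := hy'.2 n hn hlt
          rw [hfe] at h1
          exact h2 h1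
        · subst heq
          have := hTinj n hn.2.1 hy.1.1 hy'.1.1 hfe
          rw [this]
        · exfalso
          have h1 : f (n', y') ∈ C n' := hy'.1.2
          have h2 : f (n, y) ∈ (C n')ᶜ := hy.2 n' hn' hgt
          rw [hfe] at h2
          exact h2 h1
      exact rkequiv_of_injOn X (sumUF U V) f hf hΩW hinjΩ
end

section
/- Let W be a non-principal ultrafilter on ℕ and let f : ℕ → ℕ be a function that is neither finite-to-one nor constant on any set in W. Then for every n ≥ 1, every set A ∈ W, and every n-type τ, there is an n-element subset of A that realizes τ with respect to f. -/
/-- An `n`-type: a linear preorder (total preorder) on the `2n` variables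
`x_1,…,x_n` (coded `Sum.inl i`) and `y_1,…,y_n` (coded `Sum.inr i`) such that
the `y_i` occur strictly in increasing order of subscripts, no `y_i` is
equivalent to any other variable (equality signs occur only between `x`'s),
and each `x_i` strictly precedes the corresponding `y_i`. -/
structure NType (n : ℕ) where
  le : Fin n ⊕ Fin n → Fin n ⊕ Fin n → Prop
  refl : ∀ a, le a a
  trans : ∀ a b c, le a b → le b c → le a c
  total : ∀ a b, le a b ∨ le b a
  y_strict : ∀ i j : Fin n, i < j → le (Sum.inr i) (Sum.inr j) ∧ ¬ le (Sum.inr j) (Sum.inr i)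
  y_alone : ∀ (i : Fin n) (v), le (Sum.inr i) v → le v (Sum.inr i) → v = Sum.inr i
  x_before_y : ∀ i : Fin n, le (Sum.inl i) (Sum.inr i) ∧ ¬ le (Sum.inr i) (Sum.inl i)

/-- `T n` is the number of `n`-types. -/
noncomputable def T (n : ℕ) : ℕ := Nat.card (NType n)

namespace Stmt5Aux

variable {n : ℕ}

/-- The rank of a variable: the number of variables strictly below it. -/
noncomputable def rk (τ : NType n) (v : Fin n ⊕ Fin n) : ℕ :=
  {u : Fin n ⊕ Fin n | τ.le u v ∧ ¬ τ.le v u}.ncard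

lemma rk_le_iff (τ : NType n) (v w : Fin n ⊕ Fin n) :
    τ.le v w ↔ rk τ v ≤ rk τ w := by
  constructor
  · intro h
    apply Set.ncard_le_ncard _ (Set.toFinite _)
    intro u hu
    exact ⟨τ.trans _ _ _ hu.1 h, fun hwu => hu.2 (τ.trans _ _ _ h hwu)⟩
  · intro h
    by_contra hvw
    have hwv := (τ.total v w).resolve_left hvw
    have hsub : {u : Fin n ⊕ Fin n | τ.le u w ∧ ¬ τ.le w u} ⊆
        {u : Fin n ⊕ Fin n | τ.le u v ∧ ¬ τ.le v u} := by
      intro u hu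
      exact ⟨τ.trans _ _ _ hu.1 hwv, fun hvu => hu.2 (τ.trans _ _ _ hwv hvu)⟩
    have hss : {u : Fin n ⊕ Fin n | τ.le u w ∧ ¬ τ.le w u} ⊂
        {u : Fin n ⊕ Fin n | τ.le u v ∧ ¬ τ.le v u} := by
      refine ⟨hsub, fun hsub' => ?_⟩
      have hw : w ∈ {u : Fin n ⊕ Fin n | τ.le u v ∧ ¬ τ.le v u} := ⟨hwv, hvw⟩
      exact (hsub' hw).2 (τ.refl w)
    have := Set.ncard_lt_ncard hss (Set.toFinite _)
    simp only [rk] at h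
    omega

lemma rk_inr_injective (τ : NType n) {i j : Fin n}
    (h : rk τ (Sum.inr i) = rk τ (Sum.inr j)) : i = j := by
  have h1 : τ.le (Sum.inr i) (Sum.inr j) := (rk_le_iff τ _ _).mpr h.le
  have h2 : τ.le (Sum.inr j) (Sum.inr i) := (rk_le_iff τ _ _).mpr h.ge
  have := τ.y_alone i (Sum.inr j) h1 h2
  exact (Sum.inr.injEq _ _ ▸ this).symm

lemma rk_inl_lt (τ : NType n) (i : Fin n) : rk τ (Sum.inl i) < rk τ (Sum.inr i) := by
  obtain ⟨h1, h2⟩ := τ.x_before_y i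
  have hle := (rk_le_iff τ _ _).mp h1
  have hnle : ¬ rk τ (Sum.inr i) ≤ rk τ (Sum.inl i) :=
    fun h => h2 ((rk_le_iff τ _ _).mpr h)
  omega

lemma not_yLevel_inl (τ : NType n) (i : Fin n) :
    ¬ ∃ j : Fin n, rk τ (Sum.inr j) = rk τ (Sum.inl i) := by
  rintro ⟨j, hj⟩
  have h1 : τ.le (Sum.inr j) (Sum.inl i) := (rk_le_iff τ _ _).mpr hj.le
  have h2 : τ.le (Sum.inl i) (Sum.inr j) := (rk_le_iff τ _ _).mpr hj.ge
  have := τ.y_alone j (Sum.inl i) h1 h2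
  simp at this

open Classical in
/-- The property the value chosen at level `m` must satisfy, given the previous
values `g`. -/
noncomputable def pickP (τ : NType n) (f : ℕ → ℕ) (A : Set ℕ)
    (g : ℕ → ℕ) (m : ℕ) (a : ℕ) : Prop :=
  if h : ∃ i : Fin n, rk τ (Sum.inr i) = m then
    a ∈ A ∧ f a = g (rk τ (Sum.inl h.choose)) ∧ (∑ j ∈ Finset.range m, g j) < a
  else (∑ j ∈ Finset.range m, g j) < a ∧ {b ∈ A | f b = a}.Infinite

open Classical in
noncomputable def pick (τ : NType n) (f : ℕ → ℕ) (A : Set ℕ)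
    (g : ℕ → ℕ) (m : ℕ) : ℕ :=
  if h : ∃ a, pickP τ f A g m a then h.choose else 0

lemma pick_spec {τ : NType n} {f : ℕ → ℕ} {A : Set ℕ} {g : ℕ → ℕ} {m : ℕ}
    (h : ∃ a, pickP τ f A g m a) : pickP τ f A g m (pick τ f A g m) := by
  rw [pick, dif_pos h]
  exact h.choose_spec

/-- The partial assignment of values to levels `< m`. -/
noncomputable def valAux (τ : NType n) (f : ℕ → ℕ) (A : Set ℕ) : ℕ → ℕ → ℕ
  | 0 => fun _ => 0
  | m + 1 => fun m' =>
      if m' = m then pick τ f A (valAux τ f A m) m else valAux τ f A m m'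

/-- The value assigned to level `m`. -/
noncomputable def val (τ : NType n) (f : ℕ → ℕ) (A : Set ℕ) (m : ℕ) : ℕ :=
  pick τ f A (valAux τ f A m) m

lemma valAux_stable (τ : NType n) (f : ℕ → ℕ) (A : Set ℕ) :
    ∀ m m', m' < m → valAux τ f A m m' = val τ f A m' := by
  intro m
  induction m with
  | zero => omega
  | succ k IH =>
      intro m' hm'
      by_cases h : m' = k
      · subst h
        simp [valAux, val]
      · have : m' < k := by omega
        simp only [valAux, if_neg h]
        exact IH m' this

lemma pickP_gt {τ : NType n} {f : ℕ → ℕ} {A : Set ℕ} {g : ℕ → ℕ} {m a : ℕ}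
    (h : pickP τ f A g m a) : (∑ j ∈ Finset.range m, g j) < a := by
  unfold pickP at h
  split at h
  · exact h.2.2
  · exact h.1

/-- Key ultrafilter fact: on any set in `W` there are arbitrarily large values `k`
whose fiber in `A` is infinite. -/
lemma key (W : Ultrafilter ℕ) (f : ℕ → ℕ)
    (hfin : ∀ A ∈ W, ¬ (∀ k, {a ∈ A | f a = k}.Finite))
    (hconst : ∀ A ∈ W, ¬ (∃ c, ∀ a ∈ A, f a = c))
    (A : Set ℕ) (hA : A ∈ W) (M : ℕ) :
    ∃ k, M < k ∧ {a ∈ A | f a = k}.Infinite := by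
  have hB : {a | a ∈ A ∧ M < f a} ∈ W := by
    by_contra hB
    have h1 : {a | a ∈ A ∧ M < f a}ᶜ ∈ W := Ultrafilter.compl_mem_iff_notMem.mpr hB
    have hC : {a | a ∈ A ∧ f a ≤ M} ∈ W := by
      have h2 : A ∩ {a | a ∈ A ∧ M < f a}ᶜ ∈ W := Filter.inter_mem hA h1
      refine Filter.mem_of_superset h2 ?_
      rintro a ⟨ha, hna⟩
      refine ⟨ha, ?_⟩
      by_contra hle
      exact hna ⟨ha, by omega⟩
    have hU : (⋃ c ∈ (Finset.range (M + 1) : Finset ℕ), {a | a ∈ A ∧ f a = c}) ∈ W := by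
      refine Filter.mem_of_superset hC ?_
      rintro a ⟨ha, hle⟩
      exact Set.mem_biUnion (by simp; omega : f a ∈ (Finset.range (M+1) : Finset ℕ)) ⟨ha, rfl⟩
    obtain ⟨c, _, hc⟩ := (Ultrafilter.finite_biUnion_mem_iff (Finset.finite_toSet _)).mp hU
    exact hconst _ hc ⟨c, fun a ha => ha.2⟩
  obtain ⟨k, hk0⟩ := not_forall.mp (hfin _ hB)
  have hk : {a | a ∈ {a | a ∈ A ∧ M < f a} ∧ f a = k}.Infinite := hk0
  obtain ⟨a, ha⟩ := hk.nonempty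
  refine ⟨k, ?_, ?_⟩
  · have := ha.1.2
    have := ha.2
    omega
  · refine hk.mono ?_
    rintro b ⟨⟨hbA, _⟩, hbf⟩
    exact ⟨hbA, hbf⟩

end Stmt5Aux

open Stmt5Aux in
theorem stmt5 (W : Ultrafilter ℕ) (hW : ∀ A ∈ W, Set.Infinite A)
    (f : ℕ → ℕ)
    (hfin : ∀ A ∈ W, ¬ (∀ k, {a ∈ A | f a = k}.Finite))
    (hconst : ∀ A ∈ W, ¬ (∃ c, ∀ a ∈ A, f a = c)) :
    ∀ n : ℕ, 1 ≤ n → ∀ A ∈ W, ∀ τ : NType n,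
      ∃ a : Fin n → ℕ, StrictMono a ∧ (∀ i, a i ∈ A) ∧
        ∀ v w, τ.le v w ↔
          Sum.elim (fun i => f (a i)) a v ≤ Sum.elim (fun i => f (a i)) a w := by
  intro n hn A hA τ
  -- every level admits a legal choice
  have hex : ∀ m : ℕ, ∃ a, pickP τ f A (valAux τ f A m) m a := by
    intro m
    induction m using Nat.strong_induction_on with
    | _ m IH =>
      by_cases h : ∃ i : Fin n, rk τ (Sum.inr i) = m
      · -- y-level
        set i₀ := h.choose with hi₀
        have hm : rk τ (Sum.inr i₀) = m := h.choose_spec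
        have hlt : rk τ (Sum.inl i₀) < m := hm ▸ rk_inl_lt τ i₀
        set m' := rk τ (Sum.inl i₀) with hm'
        have hx : ¬ ∃ j : Fin n, rk τ (Sum.inr j) = m' := not_yLevel_inl τ i₀
        have hP' : pickP τ f A (valAux τ f A m') m' (val τ f A m') :=
          pick_spec (IH m' hlt)
        rw [pickP, dif_neg hx] at hP'
        obtain ⟨-, hinf⟩ := hP'
        obtain ⟨b, hbmem, hb⟩ := hinf.exists_gt (∑ j ∈ Finset.range m, valAux τ f A m j)
        refine ⟨b, ?_⟩
        rw [pickP, dif_pos h]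
        have hgv : valAux τ f A m (rk τ (Sum.inl h.choose)) = val τ f A m' := by
          rw [← hi₀, ← hm']
          exact valAux_stable τ f A m m' hlt
        exact ⟨hbmem.1, by rw [hgv]; exact hbmem.2, hb⟩
      · -- x-level (or empty level)
        obtain ⟨k, hk1, hk2⟩ := key W f hfin hconst A hA
          (∑ j ∈ Finset.range m, valAux τ f A m j)
        refine ⟨k, ?_⟩
        rw [pickP, dif_neg h]
        exact ⟨hk1, hk2⟩
  have hP : ∀ m, pickP τ f A (valAux τ f A m) m (val τ f A m) := fun m => pick_spec (hex m)
  -- values are strictly increasing in the level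
  have hmono : StrictMono (val τ f A) := by
    apply strictMono_nat_of_lt_succ
    intro m
    have h1 : val τ f A m ≤ ∑ j ∈ Finset.range (m + 1), valAux τ f A (m + 1) j := by
      have := valAux_stable τ f A (m + 1) m (Nat.lt_succ_self m)
      calc val τ f A m = valAux τ f A (m + 1) m := this.symm
        _ ≤ _ := Finset.single_le_sum (fun i _ => Nat.zero_le _)
            (Finset.mem_range.mpr (Nat.lt_succ_self m))
    exact lt_of_le_of_lt h1 (pickP_gt (hP (m + 1)))
  -- facts about y-levels
  have hy : ∀ i : Fin n, val τ f A (rk τ (Sum.inr i)) ∈ A ∧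
      f (val τ f A (rk τ (Sum.inr i))) = val τ f A (rk τ (Sum.inl i)) := by
    intro i
    set m := rk τ (Sum.inr i) with hmdef
    have h : ∃ j : Fin n, rk τ (Sum.inr j) = m := ⟨i, rfl⟩
    have hP' := hP m
    rw [pickP, dif_pos h] at hP'
    have hchoose : h.choose = i := rk_inr_injective τ h.choose_spec
    obtain ⟨h1, h2, -⟩ := hP'
    refine ⟨h1, ?_⟩
    rw [h2, hchoose]
    exact valAux_stable τ f A m (rk τ (Sum.inl i)) (hmdef ▸ rk_inl_lt τ i)
  refine ⟨fun i => val τ f A (rk τ (Sum.inr i)), ?_, fun i => (hy i).1, ?_⟩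
  · intro i j hij
    apply hmono
    obtain ⟨h1, h2⟩ := τ.y_strict i j hij
    have hle := (rk_le_iff τ _ _).mp h1
    have hne : rk τ (Sum.inr i) ≠ rk τ (Sum.inr j) := fun heq => hij.ne (rk_inr_injective τ heq)
    omega
  · intro v w
    have hval : ∀ u, Sum.elim (fun i => f (val τ f A (rk τ (Sum.inr i))))
        (fun i => val τ f A (rk τ (Sum.inr i))) u = val τ f A (rk τ u) := by
      rintro (i | i)
      · exact (hy i).2
      · rfl
    rw [hval, hval, rk_le_iff τ v w]
    exact (hmono.le_iff_le).symm
end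

section
/- For every n ≥ 2, every ultrafilter on ℕ that is (n, T(n)−1)-weakly Ramsey is a P-point, where T(n) is the number of n-types. -/
theorem NType.ext' {n : ℕ} {τ₁ τ₂ : NType n} (h : τ₁.le = τ₂.le) : τ₁ = τ₂ := by
  cases τ₁; cases τ₂; simp_all

def NType.rk {n : ℕ} : Fin n ⊕ Fin n → ℕ
  | .inl _ => 0
  | .inr i => (i : ℕ) + 1

def NType.default (n : ℕ) : NType n where
  le u v := NType.rk u ≤ NType.rk v
  refl _ := le_refl _
  trans _ _ _ := le_trans
  total _ _ := le_total _ _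
  y_strict i j hij := by simp only [rk]; omega
  y_alone i v h1 h2 := by
    cases v with
    | inl j => simp [rk] at h1
    | inr j =>
      simp only [rk] at h1 h2
      simp only [Sum.inr.injEq, Fin.ext_iff]
      omega
  x_before_y i := by simp only [rk]; omega

instance (n : ℕ) : Nonempty (NType n) := ⟨NType.default n⟩

instance (n : ℕ) : Finite (NType n) :=
  Finite.of_injective (fun τ => τ.le) (fun _ _ h => NType.ext' h)

def mkVal {n : ℕ} (a b : Fin n → ℕ) : Fin n ⊕ Fin n → ℕ
  | .inl i => 2 * b i
  | .inr i => 2 * a i + 1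

def mkType (n : ℕ) (a b : Fin n → ℕ) (hmono : StrictMono a) (hba : ∀ i, b i ≤ a i) :
    NType n where
  le u v := mkVal a b u ≤ mkVal a b v
  refl _ := le_refl _
  trans _ _ _ := le_trans
  total _ _ := le_total _ _
  y_strict i j hij := by have := hmono hij; simp only [mkVal]; omega
  y_alone i v h1 h2 := by
    cases v with
    | inl j => simp only [mkVal] at h1 h2; omega
    | inr j =>
      simp only [mkVal] at h1 h2
      have : a j = a i := by omega
      rw [hmono.injective this]
  x_before_y i := by have := hba i; simp only [mkVal]; omega

noncomputable def typeOf (n : ℕ) (f : ℕ → ℕ) (s : Finset ℕ) : NType n :=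
  if h : s.card = n then
    mkType n (fun i => s.orderEmbOfFin h i)
      (fun i => min (f (s.orderEmbOfFin h i)) (s.orderEmbOfFin h i))
      (s.orderEmbOfFin h).strictMono (fun i => min_le_right _ _)
  else NType.default n

noncomputable def greedy (S : ℕ → (ℕ → ℕ) → Set ℕ) : ℕ → ℕ
  | ρ =>
    sInf {m | m ∈ S ρ (fun ρ' => if h : ρ' < ρ then greedy S ρ' else 0) ∧
      ∀ ρ', (h : ρ' < ρ) → greedy S ρ' < m}
termination_by ρ => ρ
decreasing_by exact h; exact h

noncomputable def gprev (S : ℕ → (ℕ → ℕ) → Set ℕ) (ρ : ℕ) : ℕ → ℕ :=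
  fun ρ' => if ρ' < ρ then greedy S ρ' else 0

theorem greedy_eq (S : ℕ → (ℕ → ℕ) → Set ℕ) (ρ : ℕ) :
    greedy S ρ = sInf {m | m ∈ S ρ (gprev S ρ) ∧ ∀ ρ' < ρ, greedy S ρ' < m} := by
  rw [greedy]
  have hfun : (fun ρ' => if h : ρ' < ρ then greedy S ρ' else 0) = gprev S ρ := by
    funext ρ'; simp [gprev]
  rw [hfun]

theorem greedy_spec (S : ℕ → (ℕ → ℕ) → Set ℕ)
    (hS : ∀ ρ, (∀ ρ' < ρ, greedy S ρ' ∈ S ρ' (gprev S ρ')) → (S ρ (gprev S ρ)).Infinite) :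
    ∀ ρ, greedy S ρ ∈ S ρ (gprev S ρ) ∧ ∀ ρ' < ρ, greedy S ρ' < greedy S ρ := by
  intro ρ
  induction ρ using Nat.strong_induction_on with
  | _ ρ ih =>
    have hinf : (S ρ (gprev S ρ)).Infinite := hS ρ (fun ρ' h => (ih ρ' h).1)
    have hne : {m | m ∈ S ρ (gprev S ρ) ∧ ∀ ρ' < ρ, greedy S ρ' < m}.Nonempty := by
      obtain ⟨b, hb, hbgt⟩ := hinf.exists_gt ((Finset.range ρ).sup (greedy S))
      refine ⟨b, hb, fun ρ' hρ' => lt_of_le_of_lt ?_ hbgt⟩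
      exact Finset.le_sup (Finset.mem_range.mpr hρ')
    have := Nat.sInf_mem hne
    rw [← greedy_eq] at this
    exact this

theorem realize (n : ℕ) (f : ℕ → ℕ) (A : Set ℕ) (τ : NType n)
    (hIA : {k | {a ∈ A | f a = k}.Infinite}.Infinite) :
    ∃ s : Finset ℕ, ↑s ⊆ A ∧ s.card = n ∧ typeOf n f s = τ := by
  classical
  set IA := {k | {a ∈ A | f a = k}.Infinite} with hIAdef
  set r : Fin n ⊕ Fin n → ℕ :=
    fun v => (Finset.univ.filter (fun w => τ.le w v ∧ ¬ τ.le v w)).card with hrdef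
  have hr_lt : ∀ u v, τ.le u v → ¬ τ.le v u → r u < r v := by
    intro u v h1 h2
    apply Finset.card_lt_card
    constructor
    · intro w hw
      simp only [Finset.mem_filter, Finset.mem_univ, true_and] at hw ⊢
      exact ⟨τ.trans _ _ _ hw.1 h1, fun hvw => hw.2 (τ.trans _ _ _ h1 hvw)⟩
    · intro hsub
      have hu := hsub (by
        simp only [Finset.mem_filter, Finset.mem_univ, true_and]; exact ⟨h1, h2⟩)
      simp only [Finset.mem_filter, Finset.mem_univ, true_and] at hu
      exact hu.2 (τ.refl u)
  have hr_eq : ∀ u v, τ.le u v → τ.le v u → r u = r v := by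
    intro u v h1 h2
    have hset : (Finset.univ.filter (fun w => τ.le w u ∧ ¬ τ.le u w)) =
        (Finset.univ.filter (fun w => τ.le w v ∧ ¬ τ.le v w)) := by
      ext w; simp only [Finset.mem_filter, Finset.mem_univ, true_and]
      constructor
      · rintro ⟨ha, hb⟩; exact ⟨τ.trans _ _ _ ha h1, fun hc => hb (τ.trans _ _ _ h1 hc)⟩
      · rintro ⟨ha, hb⟩; exact ⟨τ.trans _ _ _ ha h2, fun hc => hb (τ.trans _ _ _ h2 hc)⟩
    simp only [hrdef, hset]
  have hr_le : ∀ u v, τ.le u v → r u ≤ r v := by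
    intro u v h1
    by_cases h2 : τ.le v u
    · exact le_of_eq (hr_eq u v h1 h2)
    · exact le_of_lt (hr_lt u v h1 h2)
  have hr_rev : ∀ u v, r u ≤ r v → τ.le u v := by
    intro u v hle
    by_contra hc
    rcases τ.total u v with hh | hh
    · exact hc hh
    · exact absurd hle (not_le.mpr (hr_lt v u hh hc))
  have hr_y : ∀ (i : Fin n) (v), r v = r (Sum.inr i) → v = Sum.inr i := by
    intro i v hv
    exact τ.y_alone i v (hr_rev _ _ hv.ge) (hr_rev _ _ hv.le)
  set S : ℕ → (ℕ → ℕ) → Set ℕ := fun ρ p =>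
    if h : ∃ i : Fin n, r (Sum.inr i) = ρ then
      {a | a ∈ A ∧ f a = p (r (Sum.inl h.choose))}
    else IA with hSdef
  set g := greedy S with hgdef
  have hx_not_y : ∀ (i : Fin n) (j : Fin n), r (Sum.inr j) ≠ r (Sum.inl i) := by
    intro i j hc
    exact absurd (hr_y j (Sum.inl i) hc.symm) (by simp)
  have hSx : ∀ (ρ : ℕ) (p : ℕ → ℕ), (¬ ∃ i : Fin n, r (Sum.inr i) = ρ) → S ρ p = IA := by
    intro ρ p hno; simp only [hSdef]; rw [dif_neg hno]
  have hspec : ∀ ρ, g ρ ∈ S ρ (gprev S ρ) ∧ ∀ ρ' < ρ, g ρ' < g ρ := by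
    apply greedy_spec
    intro ρ hprev
    by_cases hy : ∃ i : Fin n, r (Sum.inr i) = ρ
    · have hi₀ : r (Sum.inr hy.choose) = ρ := hy.choose_spec
      have hxlty : r (Sum.inl hy.choose) < ρ :=
        lt_of_lt_of_eq (hr_lt _ _ (τ.x_before_y hy.choose).1 (τ.x_before_y hy.choose).2) hi₀
      have hmem := hprev _ hxlty
      have hnx : ¬ ∃ j : Fin n, r (Sum.inr j) = r (Sum.inl hy.choose) := by
        rintro ⟨j, hj⟩; exact hx_not_y hy.choose j hj
      rw [hSx _ _ hnx] at hmem
      have hSval : S ρ (gprev S ρ) = {a | a ∈ A ∧ f a = g (r (Sum.inl hy.choose))} := by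
        simp only [hSdef]
        rw [dif_pos hy]
        have hgp : gprev S ρ (r (Sum.inl hy.choose)) = g (r (Sum.inl hy.choose)) := by
          unfold gprev; rw [if_pos hxlty]
        rw [hgp]
      rw [hSval]
      exact hmem
    · rw [hSx _ _ hy]; exact hIA
  have gmono : StrictMono g := fun ρ' ρ hlt => (hspec ρ).2 ρ' hlt
  set a : Fin n → ℕ := fun i => g (r (Sum.inr i)) with hadef
  have amono : StrictMono a := by
    intro i j hij
    exact gmono (hr_lt _ _ (τ.y_strict i j hij).1 (τ.y_strict i j hij).2)
  have haA : ∀ i, a i ∈ A ∧ f (a i) = g (r (Sum.inl i)) := by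
    intro i
    have hy : ∃ j : Fin n, r (Sum.inr j) = r (Sum.inr i) := ⟨i, rfl⟩
    have hmem := (hspec (r (Sum.inr i))).1
    simp only [hSdef] at hmem
    rw [dif_pos hy] at hmem
    have hch : hy.choose = i := by
      have h2 := hr_y i (Sum.inr hy.choose) hy.choose_spec
      simpa using h2
    rw [hch] at hmem
    have hg : gprev S (r (Sum.inr i)) (r (Sum.inl i)) = g (r (Sum.inl i)) := by
      unfold gprev; rw [if_pos (hr_lt _ _ (τ.x_before_y i).1 (τ.x_before_y i).2)]
    rw [hg] at hmem
    exact hmem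
  have hflt : ∀ i, f (a i) < a i := by
    intro i
    rw [(haA i).2]
    exact gmono (hr_lt _ _ (τ.x_before_y i).1 (τ.x_before_y i).2)
  have hcard : (Finset.image a Finset.univ).card = n := by
    rw [Finset.card_image_of_injective _ amono.injective, Finset.card_univ, Fintype.card_fin]
  refine ⟨Finset.image a Finset.univ, ?_, hcard, ?_⟩
  · intro x hx
    simp only [Finset.coe_image, Set.mem_image, Finset.coe_univ, Set.mem_univ, true_and] at hx
    obtain ⟨i, rfl⟩ := hx
    exact (haA i).1
  · unfold typeOf
    rw [dif_pos hcard]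
    have hemb : ∀ i, (Finset.image a Finset.univ).orderEmbOfFin hcard i = a i := by
      have huniq := Finset.orderEmbOfFin_unique hcard (f := a)
        (fun i => Finset.mem_image_of_mem _ (Finset.mem_univ i)) amono
      exact fun i => (congrFun huniq i).symm
    set pad : Fin n ⊕ Fin n → ℕ := Sum.elim (fun _ => 0) (fun _ => 1) with hpaddef
    have hvl : ∀ w, mkVal (fun i => (Finset.image a Finset.univ).orderEmbOfFin hcard i)
        (fun i => min (f ((Finset.image a Finset.univ).orderEmbOfFin hcard i))
          ((Finset.image a Finset.univ).orderEmbOfFin hcard i)) w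
        = 2 * g (r w) + pad w := by
      intro w
      cases w with
      | inl i =>
        simp only [mkVal, hemb, hpaddef, Sum.elim_inl, add_zero]
        rw [min_eq_left (le_of_lt (hflt i)), (haA i).2]
      | inr i =>
        simp only [mkVal, hemb, hpaddef, Sum.elim_inr]; rfl
    have hpad1 : ∀ w, pad w ≤ 1 := by
      intro w; cases w <;> simp [hpaddef]
    apply NType.ext'
    funext u v
    apply propext
    show mkVal _ _ u ≤ mkVal _ _ v ↔ τ.le u v
    have hmain : mkVal (fun i => (Finset.image a Finset.univ).orderEmbOfFin hcard i)
        (fun i => min (f ((Finset.image a Finset.univ).orderEmbOfFin hcard i))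
          ((Finset.image a Finset.univ).orderEmbOfFin hcard i)) u ≤
        mkVal (fun i => (Finset.image a Finset.univ).orderEmbOfFin hcard i)
        (fun i => min (f ((Finset.image a Finset.univ).orderEmbOfFin hcard i))
          ((Finset.image a Finset.univ).orderEmbOfFin hcard i)) v ↔ r u ≤ r v := by
      rcases lt_trichotomy (r u) (r v) with hlt | heq | hgt
      · have hg := gmono hlt
        rw [hvl u, hvl v]
        have h1 := hpad1 u
        exact iff_of_true (by omega) hlt.le
      · have hval : mkVal (fun i => (Finset.image a Finset.univ).orderEmbOfFin hcard i)
            (fun i => min (f ((Finset.image a Finset.univ).orderEmbOfFin hcard i))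
              ((Finset.image a Finset.univ).orderEmbOfFin hcard i)) u =
            mkVal (fun i => (Finset.image a Finset.univ).orderEmbOfFin hcard i)
            (fun i => min (f ((Finset.image a Finset.univ).orderEmbOfFin hcard i))
              ((Finset.image a Finset.univ).orderEmbOfFin hcard i)) v := by
          cases u with
          | inl i =>
            cases v with
            | inl j => rw [hvl, hvl, heq]; simp [hpaddef]
            | inr j => exact absurd (hr_y j (Sum.inl i) heq) (by simp)
          | inr i =>
            rw [hr_y i v heq.symm]
        exact iff_of_true (le_of_eq hval) heq.le
      · have hg := gmono hgt
        rw [hvl u, hvl v]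
        have h1 := hpad1 v
        exact iff_of_false (by omega) (by omega)
    rw [hmain]
    exact ⟨hr_rev u v, hr_le u v⟩

/-- `W` is `(n,h)`-weakly Ramsey: for every partition of the `n`-element subsets
of `α` into finitely many pieces there is a set `A ∈ W` whose `n`-element subsets
meet at most `h` pieces. -/
def WeaklyRamsey {α : Type*} (W : Ultrafilter α) (n h : ℕ) : Prop :=
  ∀ (m : ℕ) (c : Finset α → Fin m),
    ∃ A ∈ W, {j : Fin m | ∃ s : Finset α, ↑s ⊆ A ∧ s.card = n ∧ c s = j}.ncard ≤ h

/-- `W` is a P-point: for every `f : α → ℕ` there is `A ∈ W` on which `f` is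
finite-to-one or constant. -/
def IsPPoint {α : Type*} (W : Ultrafilter α) : Prop :=
  ∀ f : α → ℕ, ∃ A ∈ W, (∀ k, {a ∈ A | f a = k}.Finite) ∨ (∃ c, ∀ a ∈ A, f a = c)

theorem stmt6 (n : ℕ) (hn : 2 ≤ n) (W : Ultrafilter ℕ)
    (h : WeaklyRamsey W n (T n - 1)) : IsPPoint W := by
  classical
  intro f
  by_contra h0
  push_neg at h0
  have hfib : ∀ k, f ⁻¹' {k} ∉ W := by
    intro k hk
    obtain ⟨a, ha, hne⟩ := (h0 _ hk).2 k
    exact hne ha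
  have hInf : ∀ A ∈ W, {k | {a ∈ A | f a = k}.Infinite}.Infinite := by
    intro A hA
    by_contra hI
    rw [Set.not_infinite] at hI
    set I := {k | {a ∈ A | f a = k}.Infinite} with hIdef
    have hA' : A ∩ ⋂ k ∈ I, (f ⁻¹' {k})ᶜ ∈ W := by
      apply Filter.inter_mem hA
      rw [Filter.biInter_mem hI]
      intro k _
      exact Ultrafilter.compl_mem_iff_notMem.mpr (hfib k)
    obtain ⟨k, hk⟩ := (h0 _ hA').1
    apply hk
    by_cases hkI : k ∈ I
    · apply Set.Finite.subset Set.finite_empty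
      rintro x ⟨⟨hxA, hxc⟩, hxk⟩
      exact Set.mem_iInter₂.mp hxc k hkI hxk
    · apply Set.Finite.subset (Set.not_infinite.mp hkI)
      rintro x ⟨⟨hxA, _⟩, hxk⟩
      exact ⟨hxA, hxk⟩
  have hT1 : 0 < T n := by unfold T; exact Nat.card_pos
  have eN : NType n ≃ Fin (T n) := by unfold T; exact Finite.equivFin _
  obtain ⟨A, hA, hle⟩ := h (T n) (fun s => eN (typeOf n f s))
  have huniv : {j : Fin (T n) | ∃ s : Finset ℕ, ↑s ⊆ A ∧ s.card = n ∧ eN (typeOf n f s) = j}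
      = Set.univ := by
    ext j
    simp only [Set.mem_setOf_eq, Set.mem_univ, iff_true]
    obtain ⟨s, h1, h2, h3⟩ := realize n f A (eN.symm j) (hInf A hA)
    exact ⟨s, h1, h2, by rw [h3]; simp⟩
  rw [huniv, Set.ncard_univ] at hle
  have hfin : Nat.card (Fin (T n)) = T n := by simp
  omega
end

section
/- Let n ≥ 2, let X ∈ (F⊗F)^+, and let the n-element subsets of X be partitioned into finitely many pieces. Then there is Y ⊆ X with Y ∈ (F⊗F)^+ such that every n-element subset of Y realizes an n-type and, for each n-type τ, all n-element subsets of Y realizing τ lie in the same piece of the partition. In particular, the n-element subsets of Y meet at most T(n) pieces of the partition. -/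
/-- The `n`-th vertical section of `X ⊆ ℕ × ℕ`. -/
def sect (X : Set (ℕ × ℕ)) (n : ℕ) : Set ℕ := {m | (n, m) ∈ X}

/-- Membership in the Fubini square `F ⊗ F` of the Fréchet filter: for all but
finitely many `n`, the vertical section `X(n)` is cofinite. -/
def MemFubini (X : Set (ℕ × ℕ)) : Prop := {n | ¬ (sect X n)ᶜ.Finite}.Finite

/-- The dual ideal `(F ⊗ F)*`: complements of members of `F ⊗ F`. -/
def FubiniStar (X : Set (ℕ × ℕ)) : Prop := MemFubini Xᶜ

/-- The coideal `(F ⊗ F)⁺`: sets not in the dual ideal, equivalently sets with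
infinitely many infinite vertical sections. -/
def FubiniPlus (X : Set (ℕ × ℕ)) : Prop := ¬ FubiniStar X

/-- A finite set `s` of pairs realizes the `n`-type `τ` if, listing its elements as
`(p_1,q_1),…,(p_n,q_n)` with `q_1 < … < q_n`, all equations and inequalities of `τ`
become true when `x_i` is interpreted as `p_i` and `y_i` as `q_i`. -/
def RealizesPair {n : ℕ} (τ : NType n) (s : Finset (ℕ × ℕ)) : Prop :=
  ∃ a : Fin n → ℕ × ℕ, (↑s : Set (ℕ × ℕ)) = Set.range a ∧
    StrictMono (fun i => (a i).2) ∧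
    ∀ v w, τ.le v w ↔
      Sum.elim (fun i => (a i).1) (fun i => (a i).2) v ≤
        Sum.elim (fun i => (a i).1) (fun i => (a i).2) w


theorem myRamsey {κ : Type} [Finite κ] [Nonempty κ] : ∀ (d : ℕ) (c : Finset ℕ → κ) (S : Set ℕ), S.Infinite →
    ∃ S' : Set ℕ, S' ⊆ S ∧ S'.Infinite ∧ ∃ γ, ∀ t : Finset ℕ, ↑t ⊆ S' → t.card = d → c t = γ := by
  intro d
  induction d with
  | zero =>
    intro c S hS
    refine ⟨S, le_refl _, hS, c ∅, fun t _ ht => ?_⟩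
    rw [Finset.card_eq_zero] at ht; rw [ht]
  | succ d IH =>
    intro c S hS
    have step : ∀ (T : Set ℕ), T.Infinite → ∃ (p : Set ℕ × κ), p.1 ⊆ T ∧ p.1.Infinite ∧
        (∀ x ∈ p.1, sInf T < x) ∧
        ∀ u : Finset ℕ, ↑u ⊆ p.1 → u.card = d → c (insert (sInf T) u) = p.2 := by
      intro T hT
      obtain ⟨T', hsub, hinf, γ, hγ⟩ := IH (fun u => c (insert (sInf T) u))
        (T \ Set.Iic (sInf T)) (hT.diff (Set.finite_Iic _))
      refine ⟨⟨T', γ⟩, fun x hx => (hsub hx).1, hinf, fun x hx => ?_, hγ⟩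
      have := (hsub hx).2
      simpa [Set.mem_Iic, not_le] using this
    choose F hFsub hFinf hFgt hFhom using step
    let chain : ℕ → {T : Set ℕ // T.Infinite} := fun i =>
      Nat.rec ⟨S, hS⟩ (fun _ p => ⟨(F p.1 p.2).1, hFinf p.1 p.2⟩) i
    have hchain_succ : ∀ i, (chain (i+1)).1 ⊆ (chain i).1 := fun i => hFsub _ _
    have hchain_mono : ∀ i j, i ≤ j → (chain j).1 ⊆ (chain i).1 := by
      intro i j hij
      induction j with
      | zero => have : i = 0 := Nat.le_zero.mp hij; rw [this]
      | succ j IHj =>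
        rcases Nat.lt_or_ge i (j+1) with h | h
        · exact (IHj (Nat.lt_succ_iff.mp h)).trans' (hchain_succ j) |>.trans (le_refl _)
        · have : i = j+1 := le_antisymm hij h
          rw [this]
    let a : ℕ → ℕ := fun i => sInf (chain i).1
    let γs : ℕ → κ := fun i => (F (chain i).1 (chain i).2).2
    have ha_mem : ∀ i, a i ∈ (chain i).1 := fun i => Nat.sInf_mem (chain i).2.nonempty
    have ha_lt : ∀ i j, i < j → a i < a j := by
      intro i j hij
      have h1 : a j ∈ (chain (i+1)).1 := hchain_mono (i+1) j hij (ha_mem j)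
      exact hFgt (chain i).1 (chain i).2 _ h1
    have ha_mono : StrictMono a := fun i j h => ha_lt i j h
    obtain ⟨γ, hγ⟩ := Finite.exists_infinite_fiber γs
    have hI : (γs ⁻¹' {γ}).Infinite := Set.infinite_coe_iff.mp hγ
    refine ⟨a '' (γs ⁻¹' {γ}), ?_, hI.image (ha_mono.injective.injOn), γ, ?_⟩
    · rintro x ⟨i, _, rfl⟩
      exact hchain_mono 0 i (Nat.zero_le i) (ha_mem i)
    · intro t ht hcard
      have htne : t.Nonempty := Finset.card_pos.mp (by omega)
      obtain ⟨i, hiI, hia⟩ := ht (t.min'_mem htne)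
      have hu : ↑(t.erase (t.min' htne)) ⊆ (chain (i+1)).1 := by
        intro x hx
        have hxt := Finset.mem_of_mem_erase hx
        have hxne := Finset.ne_of_mem_erase hx
        obtain ⟨j, _, hja⟩ := ht hxt
        have hlt : t.min' htne < x := lt_of_le_of_ne (t.min'_le x hxt) (Ne.symm hxne)
        rw [← hia, ← hja] at hlt
        have hij : i < j := ha_mono.lt_iff_lt.mp hlt
        rw [← hja]
        exact hchain_mono (i+1) j hij (ha_mem j)
      have hcard' : (t.erase (t.min' htne)).card = d := by
        rw [Finset.card_erase_of_mem (t.min'_mem htne), hcard]; omega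
      have := hFhom (chain i).1 (chain i).2 _ hu hcard'
      have hteq : insert (sInf (chain i).1) (t.erase (t.min' htne)) = t := by
        have : sInf (chain i).1 = t.min' htne := hia
        rw [this, Finset.insert_erase (t.min'_mem htne)]
      rw [hteq] at this
      rw [this]
      exact hiI


def Cols (X : Set (ℕ × ℕ)) : Set ℕ := {a | (sect X a).Infinite}

def pA : ℕ → ℕ
  | 0 => 0
  | t+1 => pA t + t + 1

lemma pA_succ (t : ℕ) : pA (t+1) = pA t + t + 1 := rfl

lemma pA_le_self (t : ℕ) : t ≤ pA t := by
  induction t with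
  | zero => simp [pA]
  | succ t IH => rw [pA_succ]; omega

lemma pA_strictMono : StrictMono pA := by
  apply strictMono_nat_of_lt_succ
  intro t; rw [pA_succ]; omega

lemma pA_mono : Monotone pA := pA_strictMono.monotone

def invPA (g : ℕ) : ℕ := Nat.findGreatest (fun t => pA t ≤ g) g

lemma invPA_eq (t o : ℕ) (ho : o ≤ t) : invPA (pA t + o) = t := by
  unfold invPA
  rw [Nat.findGreatest_eq_iff]
  refine ⟨le_trans (pA_le_self t) (by omega), fun _ => by omega, fun n hn _ => ?_⟩
  have : pA (t+1) ≤ pA n := pA_mono hn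
  rw [pA_succ] at this
  omega

noncomputable def gridList (X : Set (ℕ × ℕ)) : ℕ → List ℕ
  | 0 => []
  | g+1 =>
      let L := gridList X g
      let o := g - pA (invPA g)
      L ++ [sInf {v ∈ (if o = 0 then Cols X else sect X (L.getD (pA (o-1)) 0)) |
        ∀ w ∈ L, w < v}]

noncomputable def val (X : Set (ℕ × ℕ)) (g : ℕ) : ℕ := (gridList X (g+1)).getD g 0

lemma gridList_length (X : Set (ℕ × ℕ)) (g : ℕ) : (gridList X g).length = g := by
  induction g with
  | zero => rfl
  | succ g IH => simp [gridList, IH]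

lemma gridList_succ (X : Set (ℕ × ℕ)) (g : ℕ) :
    gridList X (g+1) = gridList X g ++ [val X g] := by
  conv_lhs => rw [gridList]
  congr 1
  rw [val, gridList]
  simp [List.getD_append_right, gridList_length]

lemma val_eq_getD (X : Set (ℕ × ℕ)) {k g : ℕ} (h : k < g) :
    (gridList X g).getD k 0 = val X k := by
  induction g with
  | zero => omega
  | succ g IH =>
    rcases Nat.lt_or_ge k g with h' | h'
    · rw [gridList_succ, List.getD_append _ _ _ _ (by rw [gridList_length]; omega), IH h']
    · have : k = g := by omega
      subst this; rfl

lemma invPA_le (g : ℕ) : pA (invPA g) ≤ g := by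
  unfold invPA
  rcases Nat.eq_zero_or_pos (Nat.findGreatest (fun t => pA t ≤ g) g) with h | h
  · rw [h]; simp [pA]
  · exact (Nat.findGreatest_eq_iff.1 rfl).2.1 (Nat.pos_iff_ne_zero.mp h)

lemma lt_pA_invPA_succ (g : ℕ) : g < pA (invPA g + 1) := by
  by_contra h
  push_neg at h
  have h2 : invPA g + 1 ≤ g := le_trans (pA_le_self _) h
  have := Nat.le_findGreatest (P := fun t => pA t ≤ g) h2 h
  unfold invPA at this
  omega

lemma list_mem_le_foldr (L : List ℕ) (w : ℕ) (h : w ∈ L) : w ≤ L.foldr max 0 := by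
  induction L with
  | nil => simp at h
  | cons a L IH =>
    rcases List.mem_cons.mp h with rfl | h'
    · simp [List.foldr]
    · simp only [List.foldr]
      exact le_trans (IH h') (le_max_right _ _)

lemma val_eq (X : Set (ℕ × ℕ)) (g : ℕ) : val X g =
    sInf {v ∈ (if g - pA (invPA g) = 0 then Cols X
      else sect X ((gridList X g).getD (pA (g - pA (invPA g) - 1)) 0)) |
      ∀ w ∈ gridList X g, w < v} := by
  rw [val]
  conv_lhs => rw [gridList]
  simp [List.getD_append_right, gridList_length]

lemma grid_inv (X : Set (ℕ × ℕ)) (hC : (Cols X).Infinite) : ∀ g : ℕ,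
    (val X g ∈ (if g - pA (invPA g) = 0 then Cols X
      else sect X (val X (pA (g - pA (invPA g) - 1)))) ∧
    ∀ w ∈ gridList X g, w < val X g) := by
  intro g
  induction g using Nat.strong_induction_on with
  | _ g IH =>
    set t := invPA g with ht
    set o := g - pA t with ho
    have hle : pA t ≤ g := invPA_le g
    have hlt : g < pA t + t + 1 := by have := lt_pA_invPA_succ g; rwa [pA_succ] at this
    have hot : o ≤ t := by omega
    have htarget : (if o = 0 then Cols X
        else sect X ((gridList X g).getD (pA (o - 1)) 0)).Infinite ∧
        (if o = 0 then Cols X else sect X ((gridList X g).getD (pA (o - 1)) 0)) =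
        (if o = 0 then Cols X else sect X (val X (pA (o - 1)))) := by
      rcases Nat.eq_zero_or_pos o with h0 | h0
      · simp [h0, hC]
      · have hpos : pA (o - 1) < g := by
          have h1 : pA (o - 1) ≤ pA t := pA_mono (by omega)
          omega
        have hgd : (gridList X g).getD (pA (o-1)) 0 = val X (pA (o-1)) :=
          val_eq_getD X hpos
        constructor
        · rw [if_neg (by omega : ¬ o = 0), hgd]
          have := (IH (pA (o-1)) hpos).1
          have hinv : invPA (pA (o-1)) = o - 1 := by
            have := invPA_eq (o-1) 0 (by omega)
            simpa using this
          rw [hinv] at this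
          simp only [Nat.sub_self, if_pos rfl] at this
          exact this
        · rw [hgd]
    obtain ⟨hinf, heq⟩ := htarget
    set M := (gridList X g).foldr max 0 with hM
    obtain ⟨v, hv1, hv2⟩ := (hinf.diff (Set.finite_Iic M)).nonempty
    have hne : {w ∈ (if o = 0 then Cols X
        else sect X ((gridList X g).getD (pA (o - 1)) 0)) |
        ∀ u ∈ gridList X g, u < w}.Nonempty := by
      refine ⟨v, hv1, fun u hu => ?_⟩
      have h1 : u ≤ M := list_mem_le_foldr _ _ hu
      have h2 : ¬ v ≤ M := hv2
      omega
    have hmem := Nat.sInf_mem hne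
    rw [← val_eq X g] at hmem
    exact ⟨heq ▸ hmem.1, hmem.2⟩

lemma val_strictMono (X : Set (ℕ × ℕ)) (hC : (Cols X).Infinite) : StrictMono (val X) := by
  apply strictMono_nat_of_lt_succ
  intro g
  refine (grid_inv X hC (g+1)).2 (val X g) ?_
  rw [gridList_succ]
  simp

lemma posBB (x y x' y' : ℕ) (hx : x < y) (_ : x' < y') :
    pA y + 1 + x < pA y' + 1 + x' ↔ (y < y' ∨ (y = y' ∧ x < x')) := by
  constructor
  · intro h
    rcases lt_trichotomy y y' with h1 | h1 | h1
    · exact Or.inl h1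
    · exact Or.inr ⟨h1, by subst h1; omega⟩
    · exfalso
      have := pA_mono (Nat.succ_le_of_lt h1)
      rw [pA_succ] at this
      omega
  · rintro (h | ⟨rfl, h⟩)
    · have := pA_mono (Nat.succ_le_of_lt h)
      rw [pA_succ] at this
      omega
    · omega

lemma posAB (x x' y' : ℕ) (hx' : x' < y') : pA x < pA y' + 1 + x' ↔ x ≤ y' := by
  constructor
  · intro h
    by_contra hc
    push_neg at hc
    have := pA_mono (Nat.succ_le_of_lt hc)
    rw [pA_succ] at this
    omega
  · intro h
    have := pA_mono h
    omega

lemma posBA (x x' y' : ℕ) (hx' : x' < y') : pA y' + 1 + x' < pA x ↔ y' < x := by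
  constructor
  · intro h
    by_contra hc
    push_neg at hc
    have := pA_mono hc
    omega
  · intro h
    have := pA_mono (Nat.succ_le_of_lt h)
    rw [pA_succ] at this
    omega

lemma grid_exists (X : Set (ℕ × ℕ)) (hC : (Cols X).Infinite) :
    ∃ (A : ℕ → ℕ) (B : ℕ → ℕ → ℕ),
      (∀ x, (sect X (A x)).Infinite) ∧
      (∀ x y, x < y → B x y ∈ sect X (A x)) ∧
      StrictMono A ∧
      (∀ x y x' y', x < y → x' < y' →
        (B x y < B x' y' ↔ (y < y' ∨ (y = y' ∧ x < x')))) ∧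
      (∀ x x' y', x' < y' → (A x < B x' y' ↔ x ≤ y')) ∧
      (∀ x x' y', x' < y' → (B x' y' < A x ↔ y' < x)) := by
  have hmono := val_strictMono X hC
  refine ⟨fun x => val X (pA x), fun x y => val X (pA y + 1 + x), ?_, ?_, ?_, ?_, ?_, ?_⟩
  · intro x
    have := (grid_inv X hC (pA x)).1
    have hinv : invPA (pA x) = x := by simpa using invPA_eq x 0 (by omega)
    rw [hinv] at this
    simp at this; exact this
  · intro x y hxy
    have := (grid_inv X hC (pA y + 1 + x)).1
    have hinv : invPA (pA y + 1 + x) = y := by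
      have := invPA_eq y (1 + x) (by omega)
      rw [show pA y + (1 + x) = pA y + 1 + x by omega] at this
      exact this
    rw [hinv] at this
    have hoff : pA y + 1 + x - pA y = 1 + x := by omega
    rw [hoff] at this
    simp only [if_neg (by omega : ¬ 1 + x = 0), Nat.add_sub_cancel_left] at this
    simpa using this
  · exact fun a b h => hmono (pA_strictMono h)
  · intro x y x' y' hx hx'
    rw [hmono.lt_iff_lt, posBB x y x' y' hx hx']
  · intro x x' y' hx'
    rw [hmono.lt_iff_lt, posAB x x' y' hx']
  · intro x x' y' hx'
    rw [hmono.lt_iff_lt, posBA x x' y' hx']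


lemma rank_lt {k : ℕ} (D : Finset ℕ) (hD : D.card = k) {z : ℕ} (hz : z ∈ D) :
    (D.filter (· < z)).card < k := by
  rw [← hD]
  apply Finset.card_lt_card
  rw [Finset.ssubset_iff_of_subset (Finset.filter_subset _ _)]
  exact ⟨z, hz, by simp⟩

lemma rank_apply {k : ℕ} (D : Finset ℕ) (hD : D.card = k) {z : ℕ} (hz : z ∈ D) :
    ((D.orderIsoOfFin hD) ⟨(D.filter (· < z)).card, rank_lt D hD hz⟩ : ℕ) = z := by
  set ι := D.orderIsoOfFin hD with hι
  set i := ι.symm ⟨z, hz⟩ with hi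
  have hiz : (ι i : ℕ) = z := by rw [hi, OrderIso.apply_symm_apply]
  have himg : D.filter (· < z) =
      Finset.image (fun j : Fin k => (ι j : ℕ)) (Finset.univ.filter (fun j => j < i)) := by
    ext w
    simp only [Finset.mem_filter, Finset.mem_image, Finset.mem_univ, true_and]
    constructor
    · rintro ⟨hwD, hwz⟩
      refine ⟨ι.symm ⟨w, hwD⟩, ?_, by rw [OrderIso.apply_symm_apply]⟩
      rw [hi]
      exact (OrderIso.lt_iff_lt ι.symm).mpr (Subtype.mk_lt_mk.mpr hwz)
    · rintro ⟨j, hj, rfl⟩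
      refine ⟨(ι j).2, ?_⟩
      have h1 : ι j < ι i := (OrderIso.lt_iff_lt ι).mpr hj
      have h2 : ((ι j : ℕ)) < ((ι i : ℕ)) := Subtype.coe_lt_coe.mpr h1
      rwa [hiz] at h2
  have hinj : Function.Injective (fun j : Fin k => (ι j : ℕ)) :=
    fun a b hab => ι.injective (Subtype.coe_injective hab)
  have hcard : (D.filter (· < z)).card = (i : ℕ) := by
    rw [himg, Finset.card_image_of_injective _ hinj]
    have heq : Finset.univ.filter (fun j : Fin k => j < i) = Finset.Iio i := by
      ext j; simp
    rw [heq, Fin.card_Iio]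
  have heq : (⟨(D.filter (· < z)).card, rank_lt D hD hz⟩ : Fin k) = i := Fin.ext hcard
  rw [heq, hiz]

lemma filter_eq_of_sep (D E : Finset ℕ) (hDE : D ⊆ E)
    (hsep : ∀ e ∈ E, e ∈ D ∨ ∀ x ∈ D, x < e) {z : ℕ} (hz : z ∈ D) :
    E.filter (· < z) = D.filter (· < z) := by
  ext w
  simp only [Finset.mem_filter]
  constructor
  · rintro ⟨hwE, hwz⟩
    rcases hsep w hwE with h | h
    · exact ⟨h, hwz⟩
    · exact absurd hwz (by have := h z hz; omega)
  · rintro ⟨hwD, hwz⟩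
    exact ⟨hDE hwD, hwz⟩

lemma image_card_eq {ι : Type} [DecidableEq ι] (g g' : ι → ℕ)
    (hker : ∀ v w, g v = g w ↔ g' v = g' w) (P : Finset ι) :
    (P.image g).card = (P.image g').card := by
  classical
  apply Finset.card_bij (fun a ha => g' (Finset.mem_image.mp ha).choose)
  · intro a ha
    obtain h := (Finset.mem_image.mp ha).choose_spec
    exact Finset.mem_image.mpr ⟨_, h.1, rfl⟩
  · intro a ha b hb hab
    have h1 := (Finset.mem_image.mp ha).choose_spec
    have h2 := (Finset.mem_image.mp hb).choose_spec
    rw [← h1.2, ← h2.2]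
    exact (hker _ _).mpr hab
  · intro b hb
    obtain ⟨w, hwP, rfl⟩ := Finset.mem_image.mp hb
    have hmem : g w ∈ P.image g := Finset.mem_image.mpr ⟨w, hwP, rfl⟩
    refine ⟨g w, hmem, ?_⟩
    have h1 := (Finset.mem_image.mp hmem).choose_spec
    exact ((hker _ _).mp h1.2)

lemma filter_image {ι : Type} [DecidableEq ι] (g : ι → ℕ) (P : Finset ι) (z : ℕ) :
    (P.image g).filter (· < z) = (P.filter (fun w => g w < z)).image g := by
  ext w
  simp only [Finset.mem_filter, Finset.mem_image]
  constructor
  · rintro ⟨⟨b, hb, rfl⟩, hwz⟩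
    exact ⟨b, ⟨hb, hwz⟩, rfl⟩
  · rintro ⟨b, ⟨hb, hbz⟩, rfl⟩
    exact ⟨⟨b, hb, rfl⟩, hbz⟩

lemma pad_exists (S : Set ℕ) (hS : S.Infinite) (D : Finset ℕ) (hD : ↑D ⊆ S) :
    ∀ k : ℕ, ∃ E : Finset ℕ, ↑E ⊆ S ∧ D ⊆ E ∧ E.card = D.card + k ∧
      ∀ e ∈ E, e ∈ D ∨ ∀ x ∈ D, x < e := by
  intro k
  induction k with
  | zero => exact ⟨D, hD, subset_rfl, by simp, fun e he => Or.inl he⟩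
  | succ k IH =>
    obtain ⟨E, hE1, hE2, hE3, hE4⟩ := IH
    obtain ⟨v, hvS, hvM⟩ := (hS.diff (Set.finite_Iic (E.sup id))).nonempty
    have hvM' : ¬ v ≤ E.sup id := hvM
    have hvnotE : v ∉ E := fun h => hvM' (Finset.le_sup (f := id) h)
    refine ⟨insert v E, ?_, hE2.trans (Finset.subset_insert _ _),
      by rw [Finset.card_insert_of_notMem hvnotE, hE3]; omega, ?_⟩
    · intro x hx
      rcases Finset.mem_insert.mp (by exact_mod_cast hx) with rfl | h
      · exact hvS
      · exact hE1 (by exact_mod_cast h)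
    · intro e he
      rcases Finset.mem_insert.mp he with rfl | he'
      · right
        intro x hx
        have h1 : x ≤ E.sup id := Finset.le_sup (f := id) (hE2 hx)
        omega
      · exact hE4 e he'



lemma pow_mul_odd_inj {i k i' k' : ℕ} (h : 2^i * (2*k+3) = 2^i' * (2*k'+3)) :
    i = i' ∧ k = k' := by
  suffices H : ∀ i i' k k' : ℕ, i ≤ i' → 2^i * (2*k+3) = 2^i' * (2*k'+3) → i = i' ∧ k = k' by
    rcases le_total i i' with h1 | h1
    · exact H i i' k k' h1 h
    · obtain ⟨e1, e2⟩ := H i' i k' k h1 h.symm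
      exact ⟨e1.symm, e2.symm⟩
  intro i i' k k' hle heq
  obtain ⟨e, rfl⟩ := Nat.exists_eq_add_of_le hle
  rw [pow_add, mul_assoc] at heq
  have h2 : 0 < (2:ℕ)^i := pow_pos (by norm_num) i
  have heq2 : 2*k+3 = 2^e * (2*k'+3) := Nat.eq_of_mul_eq_mul_left h2 heq
  cases e with
  | zero => simp at heq2; omega
  | succ e =>
    exfalso
    rw [pow_succ] at heq2
    have heq3 : 2*k+3 = 2*(2^e*(2*k'+3)) := by rw [heq2]; ring
    omega

lemma pow_ne_mul_odd (i i' k' : ℕ) : 2^i ≠ 2^i' * (2*k'+3) := by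
  intro h
  rcases le_total i i' with hle | hle
  · obtain ⟨e, rfl⟩ := Nat.exists_eq_add_of_le hle
    rw [pow_add, mul_assoc] at h
    have h2 : 0 < (2:ℕ)^i := pow_pos (by norm_num) i
    have h3 : 1 = 2^e * (2*k'+3) := Nat.eq_of_mul_eq_mul_left h2 (by rw [← h, mul_one])
    have h4 : 0 < (2:ℕ)^e := pow_pos (by norm_num) e
    nlinarith
  · obtain ⟨e, rfl⟩ := Nat.exists_eq_add_of_le hle
    rw [pow_add] at h
    have h2 : 0 < (2:ℕ)^i' := pow_pos (by norm_num) i'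
    have h3 : 2^e = 2*k'+3 := Nat.eq_of_mul_eq_mul_left h2 h
    cases e with
    | zero => simp at h3
    | succ e =>
      rw [pow_succ] at h3
      omega

lemma fubiniPlus_iff (Y : Set (ℕ × ℕ)) : FubiniPlus Y ↔ (Cols Y).Infinite := by
  unfold FubiniPlus FubiniStar MemFubini
  have hset : {a | ¬ (sect Yᶜ a)ᶜ.Finite} = Cols Y := by
    ext a
    have h1 : sect Yᶜ a = (sect Y a)ᶜ := rfl
    rw [Set.mem_setOf_eq, h1, compl_compl]
    rfl
  rw [hset]
  rfl

lemma iterate_homog {κ : Type} [Finite κ] [Nonempty κ] {ι : Type} (d : ℕ)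
    (cs : ι → Finset ℕ → κ) :
    ∀ (l : List ι) (S : Set ℕ), S.Infinite →
    ∃ S' : Set ℕ, S' ⊆ S ∧ S'.Infinite ∧
      ∀ i ∈ l, ∃ γ, ∀ t : Finset ℕ, ↑t ⊆ S' → t.card = d → cs i t = γ := by
  intro l
  induction l with
  | nil => intro S hS; exact ⟨S, subset_rfl, hS, by simp⟩
  | cons i l IH =>
    intro S hS
    obtain ⟨S1, hS1sub, hS1inf, γ, hγ⟩ := myRamsey d (cs i) S hS
    obtain ⟨S', hsub, hinf, hrest⟩ := IH S1 hS1inf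
    refine ⟨S', hsub.trans hS1sub, hinf, ?_⟩
    intro i' hi'
    rcases List.mem_cons.mp hi' with rfl | h
    · exact ⟨γ, fun t ht hc => hγ t (fun x hx => hsub (ht hx)) hc⟩
    · exact hrest i' h

theorem stmt9 (n : ℕ) (hn : 2 ≤ n) (X : Set (ℕ × ℕ)) (hX : FubiniPlus X)
    (m : ℕ) (c : Finset (ℕ × ℕ) → Fin m) :
    ∃ Y : Set (ℕ × ℕ), Y ⊆ X ∧ FubiniPlus Y ∧
      (∀ s : Finset (ℕ × ℕ), ↑s ⊆ Y → s.card = n → ∃ τ : NType n, RealizesPair τ s) ∧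
      (∀ (τ : NType n) (s t : Finset (ℕ × ℕ)), ↑s ⊆ Y → ↑t ⊆ Y →
        s.card = n → t.card = n → RealizesPair τ s → RealizesPair τ t → c s = c t) ∧
      {j : Fin m | ∃ s : Finset (ℕ × ℕ), ↑s ⊆ Y ∧ s.card = n ∧ c s = j}.ncard ≤ T n  := by
  classical
  rcases Nat.eq_zero_or_pos m with rfl | hm
  · exact (c ∅).elim0
  haveI : Nonempty (Fin m) := ⟨⟨0, hm⟩⟩
  have hC : (Cols X).Infinite := (fubiniPlus_iff X).mp hX
  obtain ⟨A, B, hAc, hBs, hAm, hBB, hAB, hBA⟩ := grid_exists X hC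
  obtain ⟨S, -, hSinf, hhom⟩ := iterate_homog (κ := Fin m)
    (ι := Fin n → Fin (2*n) × Fin (2*n)) (2*n)
    (fun f E => if h : E.card = 2*n then
        c (Finset.image (fun j => (A ((E.orderIsoOfFin h) (f j).1 : ℕ),
          B ((E.orderIsoOfFin h) (f j).1 : ℕ) ((E.orderIsoOfFin h) (f j).2 : ℕ)))
          Finset.univ)
      else c ∅)
    Finset.univ.toList Set.univ Set.infinite_univ
  have hhom' : ∀ f : Fin n → Fin (2*n) × Fin (2*n), ∃ γ, ∀ E : Finset ℕ,
      ↑E ⊆ S → E.card = 2*n →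
      (if h : E.card = 2*n then
        c (Finset.image (fun j => (A ((E.orderIsoOfFin h) (f j).1 : ℕ),
          B ((E.orderIsoOfFin h) (f j).1 : ℕ) ((E.orderIsoOfFin h) (f j).2 : ℕ)))
          Finset.univ)
      else c ∅) = γ :=
    fun f => hhom f (Finset.mem_toList.mpr (Finset.mem_univ f))
  clear hhom
  -- enumeration of S
  set u : ℕ → ℕ := Nat.nth (· ∈ S) with hu_def
  have hSinf' : {x | x ∈ S}.Infinite := hSinf
  have humono : StrictMono u := Nat.nth_strictMono hSinf'
  have humem : ∀ k, u k ∈ S := fun k => Nat.nth_mem_of_infinite hSinf' k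
  set px : ℕ → ℕ := fun i => u (2^i) with hpx_def
  set py : ℕ → ℕ → ℕ := fun i k => u (2^i * (2*k+3)) with hpy_def
  have hxy : ∀ i k, px i < py i k := by
    intro i k
    apply humono
    have h2 : 0 < (2:ℕ)^i := pow_pos (by norm_num) i
    nlinarith
  have hpx_ne_py : ∀ i i' k', px i ≠ py i' k' := by
    intro i i' k' h
    exact pow_ne_mul_odd i i' k' (humono.injective h)
  have hpy_inj : ∀ i k i' k', py i k = py i' k' → i = i' ∧ k = k' :=
    fun i k i' k' h => pow_mul_odd_inj (humono.injective h)
  have hpxS : ∀ i, px i ∈ S := fun i => humem _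
  have hpyS : ∀ i k, py i k ∈ S := fun i k => humem _
  set Y : Set (ℕ × ℕ) := {p | ∃ i k, p = (A (px i), B (px i) (py i k))} with hY_def
  -- (M2) injectivity of second coordinates on Y
  have hsnd_inj : ∀ p q : ℕ × ℕ, p ∈ Y → q ∈ Y → p.2 = q.2 → p = q := by
    rintro p q ⟨i, k, rfl⟩ ⟨i', k', rfl⟩ h
    simp only at h
    have hyy : py i k = py i' k' := by
      by_contra hne
      rcases lt_or_gt_of_ne hne with hlt | hlt
      · have := (hBB _ _ _ _ (hxy i k) (hxy i' k')).mpr (Or.inl hlt); omega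
      · have := (hBB _ _ _ _ (hxy i' k') (hxy i k)).mpr (Or.inl hlt); omega
    obtain ⟨e1, e2⟩ := hpy_inj _ _ _ _ hyy
    rw [e1, e2]
  -- (M4) parameter extraction
  have hparam : ∀ (a : Fin n → ℕ × ℕ), (∀ j, a j ∈ Y) →
      ∃ xq yq : Fin n → ℕ, (∀ j, a j = (A (xq j), B (xq j) (yq j))) ∧
        (∀ j, xq j < yq j) ∧ (∀ j, xq j ∈ S) ∧ (∀ j, yq j ∈ S) ∧
        (∀ j j', xq j ≠ yq j') ∧ (∀ j j', yq j = yq j' → a j = a j') := by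
    intro a ha
    have hex : ∀ j, ∃ i k, a j = (A (px i), B (px i) (py i k)) := fun j => ha j
    choose ii kk hik using hex
    refine ⟨fun j => px (ii j), fun j => py (ii j) (kk j), fun j => hik j,
      fun j => hxy _ _, fun j => hpxS _, fun j => hpyS _ _,
      fun j j' => hpx_ne_py _ _ _, ?_⟩
    intro j j' h
    obtain ⟨e1, e2⟩ := hpy_inj _ _ _ _ h
    rw [hik j, hik j', e1, e2]
  -- (M3) sorted enumerations of n-subsets of Y
  have hMenum : ∀ s : Finset (ℕ × ℕ), ↑s ⊆ Y → s.card = n →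
      ∃ a : Fin n → ℕ × ℕ, (↑s : Set (ℕ × ℕ)) = Set.range a ∧
        StrictMono (fun j => (a j).2) := by
    intro s hs hcard
    have hinj2 : Set.InjOn Prod.snd ↑s := fun p hp q hq h =>
      hsnd_inj p q (hs hp) (hs hq) h
    have hcard2 : (s.image Prod.snd).card = n := by
      rw [Finset.card_image_of_injOn hinj2, hcard]
    set q := (s.image Prod.snd).orderIsoOfFin hcard2 with hq_def
    have hex : ∀ j : Fin n, ∃ p, p ∈ s ∧ p.2 = (q j : ℕ) := by
      intro j
      have := (q j).2
      obtain ⟨b, hb, hbe⟩ := Finset.mem_image.mp this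
      exact ⟨b, hb, hbe⟩
    choose a ha1 ha2 using hex
    refine ⟨a, ?_, ?_⟩
    · ext p
      simp only [Finset.mem_coe, Set.mem_range]
      constructor
      · intro hp
        have hmem : p.2 ∈ s.image Prod.snd := Finset.mem_image.mpr ⟨p, hp, rfl⟩
        refine ⟨q.symm ⟨p.2, hmem⟩, ?_⟩
        apply hinj2 (ha1 _) hp
        rw [ha2]
        rw [OrderIso.apply_symm_apply]
      · rintro ⟨j, rfl⟩
        exact ha1 j
    · intro j j' hjj
      have h1 : q j < q j' := (OrderIso.lt_iff_lt q).mpr hjj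
      have h2 : (q j : ℕ) < (q j' : ℕ) := Subtype.coe_lt_coe.mpr h1
      rw [← ha2 j, ← ha2 j'] at h2
      exact h2
  -- Goal 1 : Y ⊆ X
  have hG1 : Y ⊆ X := by
    rintro p ⟨i, k, rfl⟩
    exact hBs (px i) (py i k) (hxy i k)
  -- Goal 2 : FubiniPlus Y
  have hG2 : FubiniPlus Y := by
    rw [fubiniPlus_iff]
    have hsub : Set.range (fun i => A (px i)) ⊆ Cols Y := by
      rintro _ ⟨i, rfl⟩
      have hmono : StrictMono (fun k => B (px i) (py i k)) := by
        intro k k' hk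
        apply (hBB _ _ _ _ (hxy i k) (hxy i k')).mpr
        left
        apply humono
        have h2 : 0 < (2:ℕ)^i := pow_pos (by norm_num) i
        nlinarith
      have hrsub : Set.range (fun k => B (px i) (py i k)) ⊆ sect Y (A (px i)) := by
        rintro _ ⟨k, rfl⟩
        exact ⟨i, k, rfl⟩
      exact ((Set.infinite_range_of_injective hmono.injective).mono hrsub)
    have hinjA : Function.Injective (fun i => A (px i)) := by
      intro i i' h
      have : px i = px i' := hAm.injective h
      have := humono.injective this
      exact Nat.pow_right_injective (by norm_num) this
    exact (Set.infinite_range_of_injective hinjA).mono hsub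
  -- Goal 3 : every n-subset of Y realizes a type
  have hG3 : ∀ s : Finset (ℕ × ℕ), ↑s ⊆ Y → s.card = n → ∃ τ : NType n, RealizesPair τ s := by
    intro s hs hcard
    obtain ⟨a, hrange, hmono2⟩ := hMenum s hs hcard
    have haY : ∀ j, a j ∈ Y := fun j => hs (by rw [hrange]; exact Set.mem_range_self j)
    obtain ⟨xq, yq, haeq, hval, hxS, hyS, hxyne, hyinj⟩ := hparam a haY
    refine ⟨⟨fun v w => Sum.elim (fun i => (a i).1) (fun i => (a i).2) v ≤
        Sum.elim (fun i => (a i).1) (fun i => (a i).2) w,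
      fun v => le_refl _, fun v w z h h' => le_trans h h',
      fun v w => le_total _ _, ?_, ?_, ?_⟩, a, hrange, hmono2, fun v w => Iff.rfl⟩
    · intro i j hij
      have := hmono2 hij
      exact ⟨le_of_lt this, not_le.mpr this⟩
    · intro i v h1 h2
      have hve : Sum.elim (fun i => (a i).1) (fun i => (a i).2) v = (a i).2 :=
        le_antisymm h2 h1
      cases v with
      | inr j =>
        simp only [Sum.elim_inr] at hve
        exact congrArg Sum.inr (hmono2.injective hve)
      | inl j =>
        exfalso
        simp only [Sum.elim_inl] at hve
        rw [haeq j, haeq i] at hve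
        simp only at hve
        rcases Nat.lt_or_ge (yq i) (xq j) with h | h
        · have := (hBA _ _ _ (hval i)).mpr h; omega
        · have := (hAB _ _ _ (hval i)).mpr h; omega
    · intro i
      have hlt : (a i).1 < (a i).2 := by
        rw [haeq i]
        simp only
        exact (hAB _ _ _ (hval i)).mpr (le_of_lt (hval i))
      exact ⟨le_of_lt hlt, not_le.mpr hlt⟩
  -- Goal 4 : homogeneity per type
  have hG4 : ∀ (τ : NType n) (s t : Finset (ℕ × ℕ)), ↑s ⊆ Y → ↑t ⊆ Y →
      s.card = n → t.card = n → RealizesPair τ s → RealizesPair τ t → c s = c t := by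
    intro τ s t hsY htY hscard htcard hsR htR
    obtain ⟨a, hsa, hsmono, hstau⟩ := hsR
    obtain ⟨b, htb, htmono, httau⟩ := htR
    have haY : ∀ j, a j ∈ Y := fun j => hsY (by rw [hsa]; exact Set.mem_range_self j)
    have hbY : ∀ j, b j ∈ Y := fun j => htY (by rw [htb]; exact Set.mem_range_self j)
    obtain ⟨xa, ya, haeq, hav, haxS, hayS, haxyne, hayinj'⟩ := hparam a haY
    obtain ⟨xb, yb, hbeq, hbv, hbxS, hbyS, hbxyne, hbyinj'⟩ := hparam b hbY
    have hainj : Function.Injective a := fun j j' h =>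
      hsmono.injective (congrArg Prod.snd h)
    have hbinj : Function.Injective b := fun j j' h =>
      htmono.injective (congrArg Prod.snd h)
    set g : Fin n ⊕ Fin n → ℕ := Sum.elim xa ya with hg_def
    set g' : Fin n ⊕ Fin n → ℕ := Sum.elim xb yb with hg'_def
    -- comparison transfer
    have key : ∀ (x y : Fin n → ℕ) (aa : Fin n → ℕ × ℕ),
        (∀ j, aa j = (A (x j), B (x j) (y j))) → (∀ j, x j < y j) →
        (∀ j j', x j ≠ y j') → (∀ j j', y j = y j' → aa j = aa j') →
        Function.Injective aa →
        ∀ v w, Sum.elim x y v ≤ Sum.elim x y w ↔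
          (Sum.elim (fun i => (aa i).1) (fun i => (aa i).2) v ≤
            Sum.elim (fun i => (aa i).1) (fun i => (aa i).2) w) := by
      intro x y aa haa hv hne hyinj hinj v w
      cases v with
      | inl j =>
        cases w with
        | inl j' =>
          simp only [Sum.elim_inl]
          rw [haa j, haa j']
          simp only
          exact (hAm.le_iff_le).symm
        | inr j' =>
          simp only [Sum.elim_inl, Sum.elim_inr]
          rw [haa j, haa j']
          simp only
          constructor
          · intro h
            exact le_of_lt ((hAB _ _ _ (hv j')).mpr h)
          · intro h
            by_contra hc
            push_neg at hc
            have := (hBA _ _ _ (hv j')).mpr hc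
            omega
      | inr j =>
        cases w with
        | inl j' =>
          simp only [Sum.elim_inl, Sum.elim_inr]
          rw [haa j, haa j']
          simp only
          constructor
          · intro h
            have hlt : y j < x j' := lt_of_le_of_ne h (fun e => hne j' j e.symm)
            exact le_of_lt ((hBA _ _ _ (hv j)).mpr hlt)
          · intro h
            by_contra hc
            push_neg at hc
            have := (hAB _ _ _ (hv j)).mpr (le_of_lt hc)
            omega
        | inr j' =>
          simp only [Sum.elim_inr]
          rw [haa j, haa j']
          simp only
          by_cases hjj : j = j'
          · subst hjj; simp
          · have hyne : y j ≠ y j' := fun h => hjj (hinj (hyinj _ _ h))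
            constructor
            · intro h
              have hlt : y j < y j' := lt_of_le_of_ne h hyne
              exact le_of_lt ((hBB _ _ _ _ (hv j) (hv j')).mpr (Or.inl hlt))
            · intro h
              have hBne : B (x j) (y j) ≠ B (x j') (y j') := by
                intro he
                rcases lt_trichotomy (y j) (y j') with h1 | h1 | h1
                · have := (hBB _ _ _ _ (hv j) (hv j')).mpr (Or.inl h1); omega
                · exact hyne h1
                · have := (hBB _ _ _ _ (hv j') (hv j)).mpr (Or.inl h1); omega
              have hlt := lt_of_le_of_ne h hBne
              rcases (hBB _ _ _ _ (hv j) (hv j')).mp hlt with h1 | ⟨h1, _⟩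
              · exact le_of_lt h1
              · exact absurd h1 hyne
    have hcomp : ∀ v w, g v ≤ g w ↔ g' v ≤ g' w := by
      intro v w
      exact ((key xa ya a haeq hav haxyne hayinj' hainj v w).trans
        ((hstau v w).symm.trans ((httau v w).trans
          (key xb yb b hbeq hbv hbxyne hbyinj' hbinj v w).symm)))
    have hker : ∀ v w, g v = g w ↔ g' v = g' w := by
      intro v w
      constructor
      · intro h
        exact le_antisymm ((hcomp v w).mp h.le) ((hcomp w v).mp h.ge)
      · intro h
        exact le_antisymm ((hcomp v w).mpr h.le) ((hcomp w v).mpr h.ge)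
    set D : Finset ℕ := Finset.univ.image g with hD_def
    set D' : Finset ℕ := Finset.univ.image g' with hD'_def
    have hDS : ↑D ⊆ S := by
      intro z hz
      obtain ⟨v, _, rfl⟩ := Finset.mem_image.mp (Finset.mem_coe.mp hz)
      cases v with
      | inl j => exact haxS j
      | inr j => exact hayS j
    have hD'S : ↑D' ⊆ S := by
      intro z hz
      obtain ⟨v, _, rfl⟩ := Finset.mem_image.mp (Finset.mem_coe.mp hz)
      cases v with
      | inl j => exact hbxS j
      | inr j => exact hbyS j
    have huniv_card : (Finset.univ : Finset (Fin n ⊕ Fin n)).card = 2*n := by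
      rw [Finset.card_univ, Fintype.card_sum, Fintype.card_fin]
      omega
    have hDcard_le : D.card ≤ 2*n := le_trans Finset.card_image_le (le_of_eq huniv_card)
    have hDD' : D.card = D'.card := image_card_eq g g' hker Finset.univ
    obtain ⟨E, hES, hDE, hEcard0, hEsep⟩ := pad_exists S hSinf D hDS (2*n - D.card)
    have hEcard : E.card = 2*n := by omega
    obtain ⟨E', hE'S, hD'E', hE'card0, hE'sep⟩ := pad_exists S hSinf D' hD'S (2*n - D'.card)
    have hE'card : E'.card = 2*n := by omega
    have hgD : ∀ v, g v ∈ D := fun v => Finset.mem_image.mpr ⟨v, Finset.mem_univ v, rfl⟩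
    have hg'D' : ∀ v, g' v ∈ D' := fun v => Finset.mem_image.mpr ⟨v, Finset.mem_univ v, rfl⟩
    have hrank_eq : ∀ v, (D.filter (· < g v)).card = (D'.filter (· < g' v)).card := by
      intro v
      rw [hD_def, hD'_def, filter_image g Finset.univ (g v), filter_image g' Finset.univ (g' v)]
      have hfil : Finset.univ.filter (fun w => g w < g v) =
          Finset.univ.filter (fun w => g' w < g' v) := by
        ext w
        simp only [Finset.mem_filter, Finset.mem_univ, true_and]
        constructor
        · intro h
          by_contra hc
          push_neg at hc
          have := (hcomp v w).mpr hc
          omega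
        · intro h
          by_contra hc
          push_neg at hc
          have := (hcomp v w).mp hc
          omega
      rw [hfil]
      exact image_card_eq g g' hker _
    have hrank_lt : ∀ v, (D.filter (· < g v)).card < 2*n :=
      fun v => lt_of_lt_of_le (rank_lt D rfl (hgD v)) hDcard_le
    set f : Fin n → Fin (2*n) × Fin (2*n) := fun j =>
      (⟨(D.filter (· < g (Sum.inl j))).card, hrank_lt _⟩,
       ⟨(D.filter (· < g (Sum.inr j))).card, hrank_lt _⟩) with hf_def
    -- the two order-iso evaluations
    have hι_s : ∀ v, ((E.orderIsoOfFin hEcard) ⟨(D.filter (· < g v)).card, hrank_lt v⟩ : ℕ) = g v := by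
      intro v
      have hgE : g v ∈ E := hDE (hgD v)
      have hfe : E.filter (· < g v) = D.filter (· < g v) :=
        filter_eq_of_sep D E hDE hEsep (hgD v)
      have hra := rank_apply E hEcard hgE
      have hcards : (E.filter (· < g v)).card = (D.filter (· < g v)).card := by rw [hfe]
      have hidx : (⟨(E.filter (· < g v)).card, rank_lt E hEcard hgE⟩ : Fin (2*n)) =
          ⟨(D.filter (· < g v)).card, hrank_lt v⟩ := Fin.ext hcards
      rw [hidx] at hra
      exact hra
    have hι_t : ∀ v, ((E'.orderIsoOfFin hE'card) ⟨(D.filter (· < g v)).card, hrank_lt v⟩ : ℕ) = g' v := by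
      intro v
      have hg'E' : g' v ∈ E' := hD'E' (hg'D' v)
      have hfe : E'.filter (· < g' v) = D'.filter (· < g' v) :=
        filter_eq_of_sep D' E' hD'E' hE'sep (hg'D' v)
      have hra := rank_apply E' hE'card hg'E'
      have hcards : (E'.filter (· < g' v)).card = (D.filter (· < g v)).card := by
        rw [hfe, ← hrank_eq v]
      have hidx : (⟨(E'.filter (· < g' v)).card, rank_lt E' hE'card hg'E'⟩ : Fin (2*n)) =
          ⟨(D.filter (· < g v)).card, hrank_lt v⟩ := Fin.ext hcards
      rw [hidx] at hra
      exact hra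
    -- evaluation lemma
    have heval : ∀ (gg : Fin n ⊕ Fin n → ℕ) (EE : Finset ℕ) (hEE : EE.card = 2*n)
        (aa : Fin n → ℕ × ℕ) (ss : Finset (ℕ × ℕ)),
        (↑ss : Set (ℕ × ℕ)) = Set.range aa →
        (∀ j, aa j = (A (gg (Sum.inl j)), B (gg (Sum.inl j)) (gg (Sum.inr j)))) →
        (∀ v, ((EE.orderIsoOfFin hEE) ⟨(D.filter (· < g v)).card, hrank_lt v⟩ : ℕ) = gg v) →
        Finset.image (fun j => (A ((EE.orderIsoOfFin hEE) (f j).1 : ℕ),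
          B ((EE.orderIsoOfFin hEE) (f j).1 : ℕ) ((EE.orderIsoOfFin hEE) (f j).2 : ℕ)))
          Finset.univ = ss := by
      intro gg EE hEE aa ss hss haa hι
      apply Finset.coe_injective
      rw [Finset.coe_image, Finset.coe_univ, Set.image_univ, hss]
      refine congrArg Set.range (funext fun j => ?_)
      have h1 := hι (Sum.inl j)
      have h2 := hι (Sum.inr j)
      rw [haa j]
      simp only [hf_def]
      rw [h1, h2]
    obtain ⟨γ, hγ⟩ := hhom' f
    have hs' := hγ E hES hEcard
    rw [dif_pos hEcard] at hs'
    rw [heval g E hEcard a s hsa (fun j => haeq j) hι_s] at hs'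
    have ht' := hγ E' hE'S hE'card
    rw [dif_pos hE'card] at ht'
    rw [heval g' E' hE'card b t htb (fun j => hbeq j) hι_t] at ht'
    rw [hs', ht']
  -- Goal 5 : the count
  have hNfin : Finite (NType n) := by
    have hinj : Function.Injective (fun τ : NType n => τ.le) := by
      intro τ1 τ2 h
      rcases τ1 with ⟨le1, _, _, _, _, _, _⟩
      rcases τ2 with ⟨le2, _, _, _, _, _, _⟩
      simp only at h
      subst h
      rfl
    exact Finite.of_injective _ hinj
  have hG5 : {j : Fin m | ∃ s : Finset (ℕ × ℕ), ↑s ⊆ Y ∧ s.card = n ∧ c s = j}.ncard ≤ T n := by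
    have hchoice : ∀ j : {j : Fin m // ∃ s : Finset (ℕ × ℕ), ↑s ⊆ Y ∧ s.card = n ∧ c s = j},
        ∃ p : Finset (ℕ × ℕ) × NType n,
          ↑p.1 ⊆ Y ∧ p.1.card = n ∧ c p.1 = (j : Fin m) ∧ RealizesPair p.2 p.1 := by
      rintro ⟨j, s, h1, h2, h3⟩
      obtain ⟨τ, hτ⟩ := hG3 s h1 h2
      exact ⟨(s, τ), h1, h2, h3, hτ⟩
    choose F hF1 hF2 hF3 hF4 using hchoice
    have hTeq : T n = Nat.card (NType n) := rfl
    rw [hTeq]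
    have hset : {j : Fin m | ∃ s : Finset (ℕ × ℕ), ↑s ⊆ Y ∧ s.card = n ∧ c s = j}.ncard =
        Nat.card {j : Fin m // ∃ s : Finset (ℕ × ℕ), ↑s ⊆ Y ∧ s.card = n ∧ c s = j} :=
      (Nat.card_coe_set_eq _).symm
    rw [hset]
    apply Nat.card_le_card_of_injective (fun j => (F j).2)
    intro j1 j2 heq
    have heq' : (F j1).2 = (F j2).2 := heq
    have h4' := hF4 j2
    rw [← heq'] at h4'
    have hcc := hG4 (F j1).2 (F j1).1 (F j2).1 (hF1 j1) (hF1 j2) (hF2 j1) (hF2 j2)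
      (hF4 j1) h4'
    apply Subtype.ext
    rw [← hF3 j1, ← hF3 j2, hcc]
  exact ⟨Y, hG1, hG2, hG3, hG4, hG5⟩
end

section
/- For every sequence (A_k)_{k∈ℕ} of sets in (F⊗F)^+ such that A_{k+1} \ A_k ∈ (F⊗F)* for every k (i.e., the sequence is decreasing modulo F⊗F), there exists B ∈ (F⊗F)^+ such that B \ A_k ∈ (F⊗F)* for every k. That is, the quotient P(ℕ×ℕ)/(F⊗F) is countably closed. -/
lemma star_iff (X : Set (ℕ × ℕ)) :
    FubiniStar X ↔ {n | ¬ (sect X n).Finite}.Finite := by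
  unfold FubiniStar MemFubini
  have h : ∀ n, (sect Xᶜ n)ᶜ = sect X n := by
    intro n; ext m; simp [sect]
  simp only [h]

lemma sect_diff (X Y : Set (ℕ × ℕ)) (n : ℕ) :
    sect (X \ Y) n = sect X n \ sect Y n := by
  ext m; simp [sect]

lemma chain_subset (A : ℕ → Set (ℕ × ℕ)) (n : ℕ) :
    ∀ {j k : ℕ}, j ≤ k →
      sect (A k) n \ sect (A j) n ⊆ ⋃ i ∈ Finset.Ico j k, (sect (A (i+1)) n \ sect (A i) n) := by
  intro j k h
  induction k, h using Nat.le_induction with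
  | base => intro m hm; exact absurd hm.1 (by simpa using hm.2)
  | succ k h ih =>
    intro m hm
    by_cases hmk : m ∈ sect (A k) n
    · have := ih ⟨hmk, hm.2⟩
      simp only [Set.mem_iUnion, Finset.mem_Ico] at this ⊢
      obtain ⟨i, hi, hmi⟩ := this
      exact ⟨i, ⟨hi.1, hi.2.trans (Nat.lt_succ_self k)⟩, hmi⟩
    · simp only [Set.mem_iUnion, Finset.mem_Ico]
      exact ⟨k, ⟨h, Nat.lt_succ_self k⟩, hm.1, hmk⟩

theorem stmt10 (A : ℕ → Set (ℕ × ℕ))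
    (hplus : ∀ k, FubiniPlus (A k))
    (hdec : ∀ k, FubiniStar (A (k + 1) \ A k)) :
    ∃ B : Set (ℕ × ℕ), FubiniPlus B ∧ ∀ k, FubiniStar (B \ A k) := by
  classical
  set Bad : ℕ → Set ℕ :=
    fun k => ⋃ j ∈ Finset.range k, {n | ¬ (sect (A (j+1) \ A j) n).Finite} with hBad
  have hBadfin : ∀ k, (Bad k).Finite := by
    intro k
    apply Set.Finite.biUnion (Finset.range k).finite_toSet
    intro j _
    exact (star_iff _).1 (hdec j)
  set Good : ℕ → Set ℕ := fun k => {n | ¬ (sect (A k) n).Finite} \ Bad k with hGoodDef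
  have hGood : ∀ k, (Good k).Infinite := by
    intro k
    apply Set.Infinite.diff _ (hBadfin k)
    have := hplus k
    rw [FubiniPlus, star_iff] at this
    exact this
  have hex : ∀ k (b : ℕ), ∃ n, n ∈ Good k ∧ b < n := by
    intro k b
    obtain ⟨n, hn⟩ := ((hGood k).diff (Set.finite_Iic b)).nonempty
    exact ⟨n, hn.1, by simpa using hn.2⟩
  choose g hg1 hg2 using hex
  let f : ℕ → ℕ := fun k => Nat.rec (g 0 0) (fun k fk => g (k+1) fk) k
  have hfs : ∀ k, f (k+1) = g (k+1) (f k) := fun k => rfl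
  have hmem : ∀ k, f k ∈ Good k := by
    intro k
    cases k with
    | zero => exact hg1 0 0
    | succ k => rw [hfs]; exact hg1 _ _
  have hmono : StrictMono f := strictMono_nat_of_lt_succ fun k => by
    rw [hfs]; exact hg2 _ _
  -- key facts extracted from Good
  have hinf : ∀ k, ¬ (sect (A k) (f k)).Finite := fun k => (hmem k).1
  have hnotbad : ∀ k i, i < k → (sect (A (i+1) \ A i) (f k)).Finite := by
    intro k i hik
    by_contra h
    exact (hmem k).2 (Set.mem_iUnion₂.2 ⟨i, Finset.mem_range.2 hik, h⟩)
  refine ⟨{p : ℕ × ℕ | ∃ k, p.1 = f k ∧ p.2 ∈ sect (A k) (f k)}, ?_, ?_⟩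
  · -- FubiniPlus B
    rw [FubiniPlus, star_iff]
    apply Set.infinite_of_injective_forall_mem hmono.injective
    intro k
    simp only [Set.mem_setOf_eq]
    have : sect {p : ℕ × ℕ | ∃ k, p.1 = f k ∧ p.2 ∈ sect (A k) (f k)} (f k)
        = sect (A k) (f k) := by
      ext m
      simp only [sect, Set.mem_setOf_eq]
      constructor
      · rintro ⟨k', hk', hm⟩
        obtain rfl := hmono.injective hk'
        exact hm
      · intro hm; exact ⟨k, rfl, hm⟩
    rw [this]
    exact hinf k
  · -- FubiniStar (B \ A j)
    intro j
    rw [star_iff]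
    apply Set.Finite.subset ((Set.finite_Iio j).image f)
    intro n hn
    simp only [Set.mem_setOf_eq] at hn
    rw [sect_diff] at hn
    rcases Classical.em (∃ k, n = f k) with hrange | hrange
    · obtain ⟨k, rfl⟩ := hrange
      have hsect : sect {p : ℕ × ℕ | ∃ k, p.1 = f k ∧ p.2 ∈ sect (A k) (f k)} (f k)
          = sect (A k) (f k) := by
        ext m
        simp only [sect, Set.mem_setOf_eq]
        constructor
        · rintro ⟨k', hk', hm⟩
          obtain rfl := hmono.injective hk'
          exact hm
        · intro hm; exact ⟨k, rfl, hm⟩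
      rw [hsect] at hn
      by_cases hkj : k < j
      · exact ⟨k, hkj, rfl⟩
      · exfalso
        push_neg at hkj
        apply hn
        apply Set.Finite.subset
          (s := ⋃ i ∈ Finset.Ico j k, (sect (A (i+1)) (f k) \ sect (A i) (f k)))
        · apply Set.Finite.biUnion (Finset.Ico j k).finite_toSet
          intro i hi
          have := hnotbad k i (by simpa using (Finset.mem_Ico.1 hi).2)
          rwa [sect_diff] at this
        · exact chain_subset A (f k) hkj
    · exfalso
      apply hn
      have : sect {p : ℕ × ℕ | ∃ k, p.1 = f k ∧ p.2 ∈ sect (A k) (f k)} n = ∅ := by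
        ext m
        simp only [sect, Set.mem_setOf_eq, Set.mem_empty_iff_false, iff_false]
        rintro ⟨k, hk, -⟩
        exact hrange ⟨k, hk⟩
      rw [this]
      simp
end

section
/- Every P-point is a weak P-point: if W is a P-point on ℕ and (X_n)_{n∈ℕ} are non-principal ultrafilters on ℕ each distinct from W, then there exists A ∈ W such that A ∉ X_n for every n. -/
theorem stmt13 (W : Ultrafilter ℕ) (hW : IsPPoint W)
    (X : ℕ → Ultrafilter ℕ)
    (hXnp : ∀ n, ∀ A ∈ X n, Set.Infinite A)
    (hne : ∀ n, X n ≠ W) :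
    ∃ A ∈ W, ∀ n, A ∉ X n := by
  classical
  -- choose separating sets
  have hsep : ∀ n, ∃ C, C ∈ W ∧ C ∉ X n := by
    intro n
    by_contra h
    push_neg at h
    apply hne n
    exact Ultrafilter.coe_le_coe.mp (fun C hC => h C hC)
  choose C hCW hCX using hsep
  set D : ℕ → Set ℕ := fun n => {a | ∀ k < n, a ∈ C k} with hD
  have hDW : ∀ n, D n ∈ W := by
    intro n
    have hEq : D n = ⋂ k ∈ Finset.range n, C k := by
      ext a; simp [hD]
    rw [hEq]
    exact Filter.biInter_finset_mem _ |>.mpr fun k _ => hCW k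
  have hDC : ∀ n, D (n + 1) ⊆ C n := fun n a ha => ha n (Nat.lt_succ_self n)
  set f : ℕ → ℕ := fun a => if h : ∃ n, a ∉ D n then Nat.find h else 0 with hf
  have hfmem : ∀ a n, n < f a → a ∈ D n := by
    intro a n hn
    rw [hf] at hn
    by_cases h : ∃ m, a ∉ D m
    · simp only [dif_pos h] at hn
      exact not_not.mp (Nat.find_min h hn)
    · exact not_not.mp fun hc => h ⟨n, hc⟩
  have hfnot : ∀ a, f a ≠ 0 → a ∉ D (f a) := by
    intro a ha
    rw [hf]
    by_cases h : ∃ m, a ∉ D m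
    · simp only [dif_pos h]
      exact Nat.find_spec h
    · exfalso; apply ha; rw [hf]; simp [h]
  have hf0 : ∀ a, f a = 0 → ∀ n, a ∈ D n := by
    intro a ha n
    by_contra hc
    have h : ∃ m, a ∉ D m := ⟨n, hc⟩
    rw [hf] at ha
    simp only [dif_pos h] at ha
    have : a ∉ D 0 := ha ▸ Nat.find_spec h
    exact this fun k hk => absurd hk (Nat.not_lt_zero k)
  obtain ⟨A, hAW, hcase⟩ := hW f
  rcases hcase with hfin | ⟨c, hc⟩
  · -- finite-to-one case
    refine ⟨A, hAW, fun n hAX => ?_⟩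
    set F : Set ℕ := {a ∈ A | f a ≤ n + 1} with hF
    have hFfin : F.Finite := by
      have : F ⊆ ⋃ m ∈ Finset.range (n + 2), {a ∈ A | f a = m} := by
        intro a ⟨haA, hale⟩
        simp only [Set.mem_iUnion]
        exact ⟨f a, by simp [Finset.mem_range]; omega, haA, rfl⟩
      exact (Set.Finite.biUnion (Finset.finite_toSet _) fun m _ => hfin m).subset this
    have hFc : Fᶜ ∈ X n := by
      rw [Ultrafilter.compl_mem_iff_notMem]
      intro hFX
      exact hXnp n F hFX hFfin
    have hsub : A ∩ Fᶜ ⊆ C n := by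
      intro a ⟨haA, haF⟩
      have hgt : n + 1 < f a := by
        by_contra h
        exact haF ⟨haA, by omega⟩
      exact hDC n (hfmem a (n + 1) hgt)
    exact hCX n (Filter.mem_of_superset (Filter.inter_mem hAX hFc) hsub)
  · -- constant case
    rcases Nat.eq_zero_or_pos c with rfl | hcpos
    · refine ⟨A, hAW, fun n hAX => ?_⟩
      have hsub : A ⊆ C n := fun a ha => hDC n (hf0 a (hc a ha) (n + 1))
      exact hCX n (Filter.mem_of_superset hAX hsub)
    · exfalso
      obtain ⟨a, haA, haD⟩ := Ultrafilter.nonempty_of_mem (Filter.inter_mem hAW (hDW c))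
      exact hfnot a (by rw [hc a haA]; omega) (hc a haA ▸ haD)
end

section
/- Let (X_n)_{n∈ℕ} be ultrafilters on ℕ×ℕ such that for each n the image of X_n under π₁ is a non-principal ultrafilter on ℕ, and such that for each n there is f_n : ℕ → ℕ with {(x,y) ∈ ℕ×ℕ : y ≤ f_n(x)} ∈ X_n. Then there exists g : ℕ → ℕ such that the set A = {(x,y) ∈ ℕ×ℕ : y > g(x)} belongs to the filter F⊗F and A ∉ X_n for every n. -/
theorem stmt14 (X : ℕ → Ultrafilter (ℕ × ℕ))
    (h1 : ∀ n, ∀ s ∈ Ultrafilter.map Prod.fst (X n), Set.Infinite s)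
    (h2 : ∀ n, ∃ f : ℕ → ℕ, {p : ℕ × ℕ | p.2 ≤ f p.1} ∈ X n) :
    ∃ g : ℕ → ℕ, MemFubini {p : ℕ × ℕ | g p.1 < p.2} ∧
      ∀ n, {p : ℕ × ℕ | g p.1 < p.2} ∉ X n := by
  choose f hf using h2
  refine ⟨fun x => (Finset.range (x + 1)).sup (fun n => f n x), ?_, ?_⟩
  · have : {n | ¬ (sect {p : ℕ × ℕ | (Finset.range (p.1 + 1)).sup (fun k => f k p.1) < p.2} n)ᶜ.Finite} = ∅ := by
      ext n
      simp only [Set.mem_setOf_eq, Set.mem_empty_iff_false, iff_false, not_not]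
      have : (sect {p : ℕ × ℕ | (Finset.range (p.1 + 1)).sup (fun k => f k p.1) < p.2} n)ᶜ ⊆ Set.Iic ((Finset.range (n + 1)).sup (fun k => f k n)) := by
        intro m hm
        simpa [sect] using hm
      exact (Set.finite_Iic _).subset this
    rw [MemFubini, this]
    exact Set.finite_empty
  · intro n hmem
    -- {p | p.1 ≥ n} ∈ X n
    have hproj : {p : ℕ × ℕ | n ≤ p.1} ∈ X n := by
      by_contra hc
      have hc' : {p : ℕ × ℕ | n ≤ p.1}ᶜ ∈ X n := (Ultrafilter.compl_mem_iff_notMem).2 hc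
      have : Prod.fst '' {p : ℕ × ℕ | n ≤ p.1}ᶜ ∈ Ultrafilter.map Prod.fst (X n) :=
        Filter.image_mem_map hc'
      have hinf := h1 n _ this
      have : Prod.fst '' {p : ℕ × ℕ | n ≤ p.1}ᶜ ⊆ Set.Iio n := by
        rintro x ⟨p, hp, rfl⟩
        simpa using Nat.lt_of_not_le (by simpa using hp)
      exact hinf ((Set.finite_Iio n).subset this)
    have hsub : {p : ℕ × ℕ | n ≤ p.1} ∩ {p : ℕ × ℕ | p.2 ≤ f n p.1} ∩
        {p : ℕ × ℕ | (Finset.range (p.1 + 1)).sup (fun k => f k p.1) < p.2} ⊆ ∅ := by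
      rintro ⟨x, y⟩ ⟨⟨hx, hy⟩, hlt⟩
      simp only [Set.mem_setOf_eq] at hx hy hlt
      have : f n x ≤ (Finset.range (x + 1)).sup (fun k => f k x) :=
        Finset.le_sup (f := fun k => f k x) (Finset.mem_range.2 (Nat.lt_succ_of_le hx))
      exact absurd (le_trans hy this) (not_le.2 hlt)
    have : (∅ : Set (ℕ × ℕ)) ∈ X n :=
      Filter.mem_of_superset (Filter.inter_mem (Filter.inter_mem hproj (hf n)) hmem) hsub
    exact (Filter.empty_notMem (X n : Filter (ℕ × ℕ))) this
end

section
/- Let U be an ultrafilter on ℕ, regarded as the directed set (U, ⊇). If there is a Tukey map from ([ω₁]^{<ω}, ⊆) to (U, ⊇), then there is a monotone convergent map f : (U, ⊇) → ([ω₁]^{<ω}, ⊆) witnessing this reduction; that is, a map f such that u ⊇ v implies f(u) ⊆ f(v) for all u, v ∈ U, and the range of f is cofinal in ([ω₁]^{<ω}, ⊆). -/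
/-- The first uncountable cardinal `ω₁`, as the type of ordinals below `ω₁`. -/
def Omega1 : Type 1 := {o : Ordinal.{0} // o < (Cardinal.aleph 1).ord}

theorem stmt15 (U : Ultrafilter ℕ)
    -- there is a Tukey map from `([ω₁]^{<ω}, ⊆)` to `(U, ⊇)`:
    (h : ∃ g : Finset Omega1 → {A : Set ℕ // A ∈ U},
      ∀ S : Set (Finset Omega1),
        (¬ ∃ t : Finset Omega1, ∀ s ∈ S, s ⊆ t) →
        ¬ ∃ u : Set ℕ, u ∈ U ∧ ∀ s ∈ S, u ⊆ (g s).1) :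
    -- then there is a monotone map from `(U, ⊇)` to `([ω₁]^{<ω}, ⊆)` with cofinal range:
    ∃ f : {A : Set ℕ // A ∈ U} → Finset Omega1,
      (∀ u v : {A : Set ℕ // A ∈ U}, v.1 ⊆ u.1 → f u ⊆ f v) ∧
      (∀ t : Finset Omega1, ∃ u : {A : Set ℕ // A ∈ U}, t ⊆ f u) := by
  classical
  obtain ⟨g, hg⟩ := h
  have hfin : ∀ u : {A : Set ℕ // A ∈ U}, {α : Omega1 | u.1 ⊆ (g {α}).1}.Finite := by
    intro u
    by_contra hinf
    apply hg {s | ∃ α, u.1 ⊆ (g {α}).1 ∧ s = {α}}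
    · rintro ⟨t, ht⟩
      refine hinf (t.finite_toSet.subset ?_)
      intro α hα
      have := ht {α} ⟨α, hα, rfl⟩
      simpa using this
    · exact ⟨u.1, u.2, by rintro s ⟨α, hα, rfl⟩; exact hα⟩
  refine ⟨fun u => (hfin u).toFinset, ?_, ?_⟩
  · intro u v hvu α hα
    simp only [Set.Finite.mem_toFinset, Set.mem_setOf_eq] at hα ⊢
    exact hvu.trans hα
  · intro t
    have hA : (⋂ α ∈ t, (g {α}).1) ∈ U := by
      have : (⋂ α ∈ t, (g {α}).1) ∈ (U : Filter ℕ) :=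
        (Filter.biInter_finset_mem t).2 fun α _ => (g {α}).2
      exact this
    refine ⟨⟨_, hA⟩, fun α hα => ?_⟩
    simp only [Set.Finite.mem_toFinset, Set.mem_setOf_eq]
    exact Set.biInter_subset_of_mem hα
end

section
/- If an ultrafilter U on a countable set X is basically generated, then there is no Tukey map from ([ω₁]^{<ω}, ⊆) to (U, ⊇); that is, [ω₁]^{<ω} is not Tukey reducible to U. -/
/-- Pointwise (product-topology) convergence of a sequence of subsets of `X`,
identifying `𝒫(X)` with `2^X`. -/
def ConvergesTo {X : Type*} (b : ℕ → Set X) (c : Set X) : Prop :=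
  ∀ x : X, ∃ N : ℕ, ∀ n, N ≤ n → (x ∈ b n ↔ x ∈ c)

/-- `B` witnesses that the ultrafilter `U` is basically generated: `B` is a base for `U`
and every sequence from `B` converging (in `2^X`) to a member of `B` has an infinite
subsequence whose intersection is in `U`. -/
def BasicallyGeneratedBy {X : Type*} (U : Ultrafilter X) (B : Set (Set X)) : Prop :=
  (∀ b ∈ B, b ∈ U) ∧
  (∀ a ∈ U, ∃ b ∈ B, b ⊆ a) ∧
  (∀ (b : ℕ → Set X) (c : Set X), (∀ n, b n ∈ B) → c ∈ B → ConvergesTo b c →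
    ∃ M : Set ℕ, M.Infinite ∧ (⋂ n ∈ M, b n) ∈ U)

/-- `ω₁` is uncountable. -/
theorem omega1_uncountable : Uncountable Omega1 := by
  rw [← Cardinal.aleph0_lt_mk_iff]
  have h1 : Cardinal.mk Omega1 = Cardinal.mk (Set.Iio (Cardinal.aleph 1).ord) := rfl
  rw [h1, Ordinal.mk_Iio_ordinal, Cardinal.card_ord]
  rw [← Cardinal.lift_aleph0.{1,0}, Cardinal.lift_lt]
  exact Cardinal.aleph0_lt_aleph_one

/-- From a sequence of infinite sets one can pick an injective selection. -/
theorem exists_injective_selection {Y : Type*} (S : ℕ → Set Y) (hS : ∀ n, (S n).Infinite) :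
    ∃ b : ℕ → Y, Function.Injective b ∧ ∀ n, b n ∈ S n := by
  have ex : ∀ l : List Y, ∃ v, v ∈ S l.length ∧ v ∉ l := by
    intro l
    obtain ⟨v, hv⟩ := ((hS l.length).diff l.finite_toSet).nonempty
    exact ⟨v, hv.1, hv.2⟩
  choose step hstep1 hstep2 using ex
  let aux : ℕ → List Y := fun n => Nat.rec [] (fun _ l => l ++ [step l]) n
  have auxsucc : ∀ n, aux (n+1) = aux n ++ [step (aux n)] := fun n => rfl
  have auxlen : ∀ n, (aux n).length = n := by
    intro n; induction n with
    | zero => rfl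
    | succ n ih => rw [auxsucc, List.length_append, ih]; simp
  have mem_mono : ∀ m v, v ∈ aux m → ∀ n, m ≤ n → v ∈ aux n := by
    intro m v hv n
    induction n with
    | zero => intro hmn; obtain rfl := Nat.le_zero.mp hmn; exact hv
    | succ n ih =>
      intro hmn
      rcases Nat.eq_or_lt_of_le hmn with rfl | h
      · exact hv
      · rw [auxsucc]; exact List.mem_append_left _ (ih (Nat.lt_succ_iff.mp h))
  refine ⟨fun n => step (aux n), ?_, fun n => by simpa only [auxlen] using hstep1 (aux n)⟩
  have key : ∀ m n, m < n → step (aux m) ≠ step (aux n) := by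
    intro m n hmn hcontra
    apply hstep2 (aux n)
    rw [← hcontra]
    exact mem_mono (m+1) _ (by rw [auxsucc]; exact List.mem_append_right _ (List.mem_singleton_self _)) n hmn
  intro m n hmn
  by_contra hne
  rcases Nat.lt_trichotomy m n with h | h | h
  · exact key m n h hmn
  · exact hne h
  · exact key n m h hmn.symm

/-- Basic neighborhood of `a` in `2^X`: sets agreeing with `a` on points coded below `n`. -/
def Nbhd {X : Type} (e : X → ℕ) (a : Set X) (n : ℕ) : Set (Set X) :=
  {b | ∀ x : X, e x < n → (x ∈ b ↔ x ∈ a)}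

/-- Every uncountable family of subsets of a countable set has a condensation point
belonging to the family. -/
theorem exists_condensation {X : Type} [Countable X] (e : X → ℕ) (he : Function.Injective e)
    (A : Set (Set X)) (hA : ¬ A.Countable) :
    ∃ a ∈ A, ∀ n : ℕ, ¬ (A ∩ Nbhd e a n).Countable := by
  by_contra hcon
  push_neg at hcon
  have h' : ∀ a : Set X, ∃ n : ℕ, a ∈ A → (A ∩ Nbhd e a n).Countable := by
    intro a
    by_cases ha : a ∈ A
    · obtain ⟨n, hn⟩ := hcon a ha; exact ⟨n, fun _ => hn⟩
    · exact ⟨0, fun h => absurd h ha⟩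
  choose nn hnn using h'
  have hfin : ∀ a : Set X, (a ∩ {x | e x < nn a}).Finite := by
    intro a
    exact Set.Finite.subset ((Set.finite_Iio (nn a)).preimage he.injOn) (Set.inter_subset_right)
  let key : Set X → ℕ × Finset X := fun a => (nn a, (hfin a).toFinset)
  apply hA
  have hsub : A ⊆ ⋃ (k : ℕ × Finset X), {a | a ∈ A ∧ key a = k} := by
    intro a ha; exact Set.mem_iUnion.mpr ⟨key a, ha, rfl⟩
  refine Set.Countable.mono hsub (Set.countable_iUnion ?_)
  intro k
  by_cases hne : {a | a ∈ A ∧ key a = k}.Nonempty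
  · obtain ⟨a₀, ha₀A, ha₀k⟩ := hne
    refine Set.Countable.mono ?_ (hnn a₀ ha₀A)
    rintro a ⟨haA, hak⟩
    have h1 : nn a = nn a₀ := by
      have := hak.trans ha₀k.symm
      exact (Prod.mk.injEq _ _ _ _ ▸ this).1
    have h2 : (a ∩ {x | e x < nn a}) = (a₀ ∩ {x | e x < nn a₀}) := by
      have := (Prod.mk.injEq _ _ _ _ ▸ hak.trans ha₀k.symm).2
      rwa [Set.Finite.toFinset_inj] at this
    refine ⟨haA, fun x hx => ?_⟩
    constructor
    · intro hxa
      have : x ∈ a ∩ {x | e x < nn a} := ⟨hxa, by rwa [h1]⟩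
      rw [h2] at this; exact this.1
    · intro hxa₀
      have : x ∈ a₀ ∩ {x | e x < nn a₀} := ⟨hxa₀, hx⟩
      rw [← h2] at this; exact this.1
  · rw [Set.not_nonempty_iff_eq_empty] at hne
    rw [hne]; exact Set.countable_empty

/-- From any uncountably-indexed family of subsets of a countable set one can extract an
injectively-indexed sequence converging to a member of the family. -/
theorem exists_conv_seq {X : Type} [Countable X] {I : Type*} [Uncountable I] (c : I → Set X) :
    ∃ β : I, ∃ α : ℕ → I, Function.Injective α ∧ ConvergesTo (fun n => c (α n)) (c β) := by
  obtain ⟨e, he⟩ := exists_injective_nat X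
  by_cases hA : (Set.range c).Countable
  · -- some fiber is uncountable, hence infinite
    have : ∃ β : I, ¬ {i : I | c i = c β}.Countable := by
      by_contra hfib
      push_neg at hfib
      have : (Set.univ : Set I).Countable := by
        have hsub : (Set.univ : Set I) ⊆ ⋃ (v : Set.range c), {i : I | c i = v.1} := by
          intro i _
          exact Set.mem_iUnion.mpr ⟨⟨c i, Set.mem_range_self i⟩, rfl⟩
        haveI : Countable (Set.range c) := hA.to_subtype
        refine Set.Countable.mono hsub (Set.countable_iUnion ?_)
        rintro ⟨v, β, rfl⟩
        exact hfib β
      exact (not_countable_iff.mpr ‹Uncountable I›).elim (Set.countable_univ_iff.mp this)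
    obtain ⟨β, hβ⟩ := this
    have hinf : {i : I | c i = c β}.Infinite := fun hfin => hβ hfin.countable
    obtain ⟨α, hαinj, hαmem⟩ := exists_injective_selection (fun _ => {i : I | c i = c β})
      (fun _ => hinf)
    refine ⟨β, α, hαinj, fun x => ⟨0, fun n _ => ?_⟩⟩
    show x ∈ c (α n) ↔ x ∈ c β
    rw [hαmem n]
  · obtain ⟨a, ⟨β, hβ⟩, hcond⟩ := exists_condensation e he (Set.range c) hA
    have hinf : ∀ n, (Set.range c ∩ Nbhd e a n).Infinite :=
      fun n hfin => hcond n hfin.countable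
    obtain ⟨b, hbinj, hbmem⟩ := exists_injective_selection _ hinf
    have hrange : ∀ n, ∃ i, c i = b n := fun n => (hbmem n).1
    choose α hα using hrange
    refine ⟨β, α, ?_, ?_⟩
    · intro m n hmn
      apply hbinj
      rw [← hα m, ← hα n, hmn]
    · intro x
      refine ⟨e x + 1, fun n hn => ?_⟩
      show x ∈ c (α n) ↔ x ∈ c β
      rw [hα n, hβ]
      exact (hbmem n).2 x (by omega)

theorem stmt17 {X : Type} [Countable X] (U : Ultrafilter X)
    (h : ∃ B : Set (Set X), BasicallyGeneratedBy U B) :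
    -- there is no Tukey map from `([ω₁]^{<ω}, ⊆)` to `(U, ⊇)`:
    ¬ ∃ g : Finset Omega1 → {A : Set X // A ∈ U},
      ∀ S : Set (Finset Omega1),
        (¬ ∃ t : Finset Omega1, ∀ s ∈ S, s ⊆ t) →
        ¬ ∃ u : Set X, u ∈ U ∧ ∀ s ∈ S, u ⊆ (g s).1 := by
  obtain ⟨B, hB1, hB2, hB3⟩ := h
  rintro ⟨g, hg⟩
  haveI : Uncountable Omega1 := omega1_uncountable
  have hx : ∀ α : Omega1, ∃ c ∈ B, c ⊆ (g {α}).1 := fun α => hB2 _ (g {α}).2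
  choose c hcB hcsub using hx
  obtain ⟨β, α, hαinj, hconv⟩ := exists_conv_seq c
  obtain ⟨M, hMinf, hMU⟩ := hB3 (fun n => c (α n)) (c β) (fun n => hcB _) (hcB β) hconv
  refine hg ((fun n => ({α n} : Finset Omega1)) '' M) ?_ ⟨⋂ n ∈ M, c (α n), hMU, ?_⟩
  · rintro ⟨t, ht⟩
    have hsub : α '' M ⊆ ↑t := by
      rintro _ ⟨n, hn, rfl⟩
      have := ht {α n} ⟨n, hn, rfl⟩
      simpa using this
    exact (hMinf.image hαinj.injOn) (Set.Finite.subset t.finite_toSet hsub)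
  · rintro s ⟨n, hn, rfl⟩
    exact fun x hx => hcsub (α n) (Set.biInter_subset_of_mem hn hx)
end
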